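/- arXiv:2101.06260 — 4 statements merged into one kernel-verified Lean document; each statement's English description precedes it below -/
import Mathlib

section
/- For all non-negative integers n, j and all integers r ≥ 2, b_{j,r}(n) = (r−1)·((j+1)·|D_{j+1,r}(n)| − j·|D_{j,r}(n)|), where the equality holds in the integers. -/
open Finset

/-- The number of parts of a partition. -/
def numParts {n : ℕ} (p : Nat.Partition n) : ℕ := Multiset.card p.parts

/-- The number of different parts of a partition. -/
def numDistinctParts {n : ℕ} (p : Nat.Partition n) : ℕ := p.parts.toFinset.card

/-- `O_{j,r}(n)`: partitions of `n` with exactly `j` different parts divisible by `r`. -/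
def setO (j r n : ℕ) : Finset (Nat.Partition n) :=
  Finset.univ.filter fun p => (p.parts.toFinset.filter fun i => r ∣ i).card = j

/-- `D_{j,r}(n)`: partitions of `n` with exactly `j` different parts repeated at least `r`
times (all other parts appearing at most `r - 1` times). -/
def setD (j r n : ℕ) : Finset (Nat.Partition n) :=
  Finset.univ.filter fun p => (p.parts.toFinset.filter fun i => r ≤ p.parts.count i).card = j

/-- `O_{≤j,r}(n)`: partitions of `n` with at most `j` different parts divisible by `r`. -/
def setOle (j r n : ℕ) : Finset (Nat.Partition n) :=
  Finset.univ.filter fun p => (p.parts.toFinset.filter fun i => r ∣ i).card ≤ j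

/-- `D_{≤j,r}(n)`: partitions of `n` with at most `j` different parts repeated at least `r`
times (all other parts appearing at most `r - 1` times). -/
def setDle (j r n : ℕ) : Finset (Nat.Partition n) :=
  Finset.univ.filter fun p => (p.parts.toFinset.filter fun i => r ≤ p.parts.count i).card ≤ j

/-- `ℓ_t(λ)`: the number of parts of `λ` congruent to `t` modulo `r`, counted with
multiplicity. -/
def ellMod {n : ℕ} (r t : ℕ) (p : Nat.Partition n) : ℕ :=
  Multiset.card (p.parts.filter fun i => i % r = t)

/-- `ℓ̄_t(λ)`: the number of different parts of `λ` whose residual multiplicity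
(multiplicity mod `r`) is at least `t`. -/
def ellBarMod {n : ℕ} (r t : ℕ) (p : Nat.Partition n) : ℕ :=
  (p.parts.toFinset.filter fun i => t ≤ p.parts.count i % r).card

/-- `b_{j,r}(n)`: the difference between the number of parts in all partitions in
`O_{j,r}(n)` and the number of parts in all partitions in `D_{j,r}(n)`. -/
def bDiff (j r n : ℕ) : ℤ :=
  (∑ p ∈ setO j r n, (numParts p : ℤ)) - ∑ p ∈ setD j r n, (numParts p : ℤ)

/-- `b_{≤j,r}(n)`. -/
def bDiffLe (j r n : ℕ) : ℤ :=
  (∑ p ∈ setOle j r n, (numParts p : ℤ)) - ∑ p ∈ setDle j r n, (numParts p : ℤ)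

/-- `E_{j,r,t}(n)`. -/
def EDiff (j r t n : ℕ) : ℤ :=
  (∑ p ∈ setO j r n, ((ellMod r t p : ℤ) - (ellMod r 0 p : ℤ))) -
    ∑ p ∈ setD j r n, (ellBarMod r t p : ℤ)

/-- `b'_{j,r}(n)`: the difference between the number of different parts in all partitions in
`D_{j,r}(n)` and the number of different parts in all partitions in `O_{j,r}(n)`. -/
def bDiff' (j r n : ℕ) : ℤ :=
  (∑ p ∈ setD j r n, (numDistinctParts p : ℤ)) - ∑ p ∈ setO j r n, (numDistinctParts p : ℤ)

/-- `b'_{≤j,r}(n)`. -/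
def bDiffLe' (j r n : ℕ) : ℤ :=
  (∑ p ∈ setDle j r n, (numDistinctParts p : ℤ)) - ∑ p ∈ setOle j r n, (numDistinctParts p : ℤ)

/-- `T_{j,r}(n)`: the number of different parts with multiplicity between `r + 1` and
`2r - 1` in all partitions in `D_{j,r}(n)`. -/
def Tcount (j r n : ℕ) : ℕ :=
  ∑ p ∈ setD j r n,
    (p.parts.toFinset.filter fun i =>
      r + 1 ≤ p.parts.count i ∧ p.parts.count i ≤ 2 * r - 1).card

namespace BDiffAux

open Polynomial

variable {n : ℕ}

/-- The set of distinct parts of `p` divisible by `r`. -/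
def Afin (r : ℕ) {n : ℕ} (p : Nat.Partition n) : Finset ℕ :=
  p.parts.toFinset.filter fun i => r ∣ i

/-- The set of distinct parts of `p` with multiplicity at least `r`. -/
def Dfin (r : ℕ) {n : ℕ} (p : Nat.Partition n) : Finset ℕ :=
  p.parts.toFinset.filter fun i => r ≤ p.parts.count i

def Tof (r : ℕ) (S : Finset ℕ) : Finset ℕ := S.image (· / r)
def Sof (r : ℕ) (T : Finset ℕ) : Finset ℕ := T.image (r * ·)

lemma count_finset_val (S : Finset ℕ) (i : ℕ) :
    S.val.count i = if i ∈ S then 1 else 0 := by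
  split_ifs with h
  · exact Multiset.count_eq_one_of_mem S.nodup h
  · exact Multiset.count_eq_zero_of_notMem h

lemma mem_Tof {r : ℕ} (hr : 2 ≤ r) {S : Finset ℕ} (hdvd : ∀ s ∈ S, r ∣ s) {i : ℕ} :
    i ∈ Tof r S ↔ r * i ∈ S := by
  constructor
  · rintro hi
    obtain ⟨s, hs, rfl⟩ := Finset.mem_image.mp hi
    rwa [Nat.mul_div_cancel' (hdvd s hs)]
  · intro h
    exact Finset.mem_image.mpr ⟨r * i, h, by rw [Nat.mul_div_cancel_left _ (by omega : 0 < r)]⟩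

lemma mem_Sof {r : ℕ} (hr : 2 ≤ r) {T : Finset ℕ} {i : ℕ} :
    i ∈ Sof r T ↔ r ∣ i ∧ i / r ∈ T := by
  constructor
  · rintro hi
    obtain ⟨t, ht, rfl⟩ := Finset.mem_image.mp hi
    exact ⟨Dvd.intro t rfl, by rwa [Nat.mul_div_cancel_left _ (by omega : 0 < r)]⟩
  · rintro ⟨hdvd, ht⟩
    exact Finset.mem_image.mpr ⟨i / r, ht, Nat.mul_div_cancel' hdvd⟩

lemma card_Tof {r : ℕ} (hr : 2 ≤ r) {S : Finset ℕ} (hdvd : ∀ s ∈ S, r ∣ s) :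
    (Tof r S).card = S.card := by
  refine Finset.card_image_of_injOn ?_
  intro x hx y hy hxy
  dsimp only at hxy
  rw [← Nat.mul_div_cancel' (hdvd x hx), ← Nat.mul_div_cancel' (hdvd y hy), hxy]

lemma card_Sof {r : ℕ} (hr : 2 ≤ r) {T : Finset ℕ} :
    (Sof r T).card = T.card := by
  refine Finset.card_image_of_injOn ?_
  intro x _ y _ hxy
  exact Nat.eq_of_mul_eq_mul_left (by omega) hxy

lemma mem_Afin {r : ℕ} {p : Nat.Partition n} {i : ℕ} :
    i ∈ Afin r p ↔ i ∈ p.parts ∧ r ∣ i := by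
  simp [Afin]

lemma mem_Dfin {r : ℕ} {p : Nat.Partition n} {i : ℕ} :
    i ∈ Dfin r p ↔ i ∈ p.parts ∧ r ≤ p.parts.count i := by
  simp [Dfin]

lemma sval_le_parts {r : ℕ} {p : Nat.Partition n} {S : Finset ℕ} (hS : S ⊆ Afin r p) :
    S.val ≤ p.parts := by
  rw [Multiset.le_iff_count]
  intro a
  rw [count_finset_val]
  split_ifs with h
  · exact Multiset.one_le_count_iff_mem.mpr (mem_Afin.mp (hS h)).1
  · exact Nat.zero_le _

lemma rT_le_parts {r : ℕ} {q : Nat.Partition n} {T : Finset ℕ} (hT : T ⊆ Dfin r q) :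
    r • T.val ≤ q.parts := by
  rw [Multiset.le_iff_count]
  intro a
  rw [Multiset.count_nsmul, count_finset_val]
  split_ifs with h
  · simpa using (mem_Dfin.mp (hT h)).2
  · simp

lemma sum_smul_nat (r : ℕ) (s : Multiset ℕ) : (r • s).sum = r * s.sum := by
  induction r with
  | zero => simp
  | succ k ih => rw [succ_nsmul, Multiset.sum_add, ih]; ring

lemma finset_val_sum (F : Finset ℕ) : F.val.sum = ∑ i ∈ F, i := by
  rw [Finset.sum]; simp

lemma sum_nsmul_Tof {r : ℕ} (hr : 2 ≤ r) {S : Finset ℕ} (hdvd : ∀ s ∈ S, r ∣ s) :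
    (r • (Tof r S).val).sum = S.val.sum := by
  rw [sum_smul_nat, finset_val_sum, finset_val_sum]
  rw [Tof, Finset.sum_image (by
    intro x hx y hy hxy
    dsimp only at hxy
    rw [← Nat.mul_div_cancel' (hdvd x hx), ← Nat.mul_div_cancel' (hdvd y hy), hxy])]
  rw [Finset.mul_sum]
  exact Finset.sum_congr rfl fun s hs => Nat.mul_div_cancel' (hdvd s hs)

lemma sum_Sof {r : ℕ} (hr : 2 ≤ r) {T : Finset ℕ} :
    (Sof r T).val.sum = (r • T.val).sum := by
  rw [sum_smul_nat, finset_val_sum, finset_val_sum]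
  rw [Sof, Finset.sum_image
    (by intro x _ y _ h; exact Nat.eq_of_mul_eq_mul_left (by omega) h)]
  rw [Finset.mul_sum]

/-- The forward (Glaisher split) map on a partition with a marked set of parts divisible
by `r`: remove one copy of each marked part `s` and add `r` copies of `s / r`. -/
def fwd (r : ℕ) {n : ℕ} (p : Nat.Partition n) (S : Finset ℕ) (hr : 2 ≤ r)
    (hS : S ⊆ Afin r p) : Nat.Partition n where
  parts := (p.parts - S.val) + r • (Tof r S).val
  parts_pos := by
    intro i hi
    rcases Multiset.mem_add.mp hi with h | h
    · exact p.parts_pos (Multiset.mem_of_le (tsub_le_self) h)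
    · have hi' : i ∈ Tof r S := (Multiset.mem_nsmul.mp h).2
      have hrS : r * i ∈ S := (mem_Tof hr (fun s hs => (mem_Afin.mp (hS hs)).2)).mp hi'
      have hpos : 0 < r * i := p.parts_pos (mem_Afin.mp (hS hrS)).1
      rcases Nat.eq_zero_or_pos i with rfl | h
      · simp at hpos
      · exact h
  parts_sum := by
    have hle := sval_le_parts hS
    have h1 : (p.parts - S.val) + S.val = p.parts := tsub_add_cancel_of_le hle
    have h2 := congrArg Multiset.sum h1
    rw [Multiset.sum_add] at h2
    rw [Multiset.sum_add, sum_nsmul_Tof hr (fun s hs => (mem_Afin.mp (hS hs)).2)]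
    rw [p.parts_sum] at h2
    omega

/-- The backward (Glaisher merge) map: remove `r` copies of each marked part `t`
(of multiplicity at least `r`) and add one copy of `r * t`. -/
def bwd (r : ℕ) {n : ℕ} (q : Nat.Partition n) (T : Finset ℕ) (hr : 2 ≤ r)
    (hT : T ⊆ Dfin r q) : Nat.Partition n where
  parts := (q.parts - r • T.val) + (Sof r T).val
  parts_pos := by
    intro i hi
    rcases Multiset.mem_add.mp hi with h | h
    · exact q.parts_pos (Multiset.mem_of_le (tsub_le_self) h)
    · have hi' : i ∈ Sof r T := h
      obtain ⟨hdvd, ht⟩ := (mem_Sof hr).mp hi'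
      have hpos : 0 < i / r := q.parts_pos (mem_Dfin.mp (hT ht)).1
      rcases Nat.eq_zero_or_pos i with rfl | h
      · simp at hpos
      · exact h
  parts_sum := by
    have hle := rT_le_parts hT
    have h1 : (q.parts - r • T.val) + r • T.val = q.parts := tsub_add_cancel_of_le hle
    have h2 := congrArg Multiset.sum h1
    rw [Multiset.sum_add] at h2
    rw [Multiset.sum_add, sum_Sof hr]
    rw [q.parts_sum] at h2
    omega

lemma fwd_count {r : ℕ} {p : Nat.Partition n} {S : Finset ℕ} (hr : 2 ≤ r)
    (hS : S ⊆ Afin r p) (i : ℕ) :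
    (fwd r p S hr hS).parts.count i
      = (p.parts.count i - (if i ∈ S then 1 else 0)) + r * (if r * i ∈ S then 1 else 0) := by
  have hdvd : ∀ s ∈ S, r ∣ s := fun s hs => (mem_Afin.mp (hS hs)).2
  simp only [fwd, Multiset.count_add, Multiset.count_sub, Multiset.count_nsmul,
    count_finset_val, mem_Tof hr hdvd]

lemma bwd_count {r : ℕ} {q : Nat.Partition n} {T : Finset ℕ} (hr : 2 ≤ r)
    (hT : T ⊆ Dfin r q) (i : ℕ) :
    (bwd r q T hr hT).parts.count i
      = (q.parts.count i - r * (if i ∈ T then 1 else 0))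
        + (if i ∈ Sof r T then 1 else 0) := by
  simp only [bwd, Multiset.count_add, Multiset.count_sub, Multiset.count_nsmul,
    count_finset_val]

lemma fwd_mem_D {r : ℕ} {p : Nat.Partition n} {S : Finset ℕ} (hr : 2 ≤ r)
    (hS : S ⊆ Afin r p) : Tof r S ⊆ Dfin r (fwd r p S hr hS) := by
  intro i hi
  have hdvd : ∀ s ∈ S, r ∣ s := fun s hs => (mem_Afin.mp (hS hs)).2
  have hrS : r * i ∈ S := (mem_Tof hr hdvd).mp hi
  have hcount := fwd_count hr hS i
  rw [if_pos hrS] at hcount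
  have hge : r ≤ (fwd r p S hr hS).parts.count i := by omega
  refine mem_Dfin.mpr ⟨?_, hge⟩
  rw [← Multiset.count_pos]
  omega

lemma bwd_mem_A {r : ℕ} {q : Nat.Partition n} {T : Finset ℕ} (hr : 2 ≤ r)
    (hT : T ⊆ Dfin r q) : Sof r T ⊆ Afin r (bwd r q T hr hT) := by
  intro s hs
  obtain ⟨hdvd, ht⟩ := (mem_Sof hr).mp hs
  have hcq : r ≤ q.parts.count (s / r) ∨ True := Or.inr trivial
  have hcount := bwd_count hr hT s
  rw [if_pos hs] at hcount
  have hTD : ∀ t ∈ T, r ≤ q.parts.count t := fun t h => (mem_Dfin.mp (hT h)).2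
  have hge : 1 ≤ (bwd r q T hr hT).parts.count s := by
    rcases (em (s ∈ T)) with h | h
    · have := hTD s h
      rw [if_pos h] at hcount; omega
    · rw [if_neg h] at hcount; omega
  refine mem_Afin.mpr ⟨?_, hdvd⟩
  rw [← Multiset.count_pos]
  omega

lemma numParts_fwd {r : ℕ} {p : Nat.Partition n} {S : Finset ℕ} (hr : 2 ≤ r)
    (hS : S ⊆ Afin r p) :
    numParts (fwd r p S hr hS) = numParts p + (r - 1) * S.card := by
  have hdvd : ∀ s ∈ S, r ∣ s := fun s hs => (mem_Afin.mp (hS hs)).2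
  have hle := sval_le_parts hS
  have hcard : S.val.card ≤ Multiset.card p.parts := Multiset.card_le_card hle
  simp only [numParts, fwd, Multiset.card_add, Multiset.card_sub hle, Multiset.card_nsmul]
  have h1 : Multiset.card (Tof r S).val = S.card := card_Tof hr hdvd
  rw [h1]
  have h2 : S.val.card = S.card := rfl
  rw [h2] at hcard ⊢
  have h4 : S.card ≤ r * S.card := Nat.le_mul_of_pos_left _ (by omega)
  have h5 : (r - 1) * S.card = r * S.card - S.card := by rw [Nat.sub_one_mul]
  omega

lemma card_le_numParts {r : ℕ} {q : Nat.Partition n} {T : Finset ℕ} (hr : 2 ≤ r)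
    (hT : T ⊆ Dfin r q) : r * T.card ≤ numParts q := by
  have h1 : ∀ t ∈ T, r ≤ q.parts.count t := fun t h => (mem_Dfin.mp (hT h)).2
  have h2 : T.card • r ≤ ∑ t ∈ T, q.parts.count t := Finset.card_nsmul_le_sum T _ r h1
  have h3 : T ⊆ q.parts.toFinset := fun t h => by
    have := (mem_Dfin.mp (hT h)).1
    simpa [Multiset.mem_toFinset] using this
  have h4 : ∑ t ∈ T, q.parts.count t ≤ ∑ t ∈ q.parts.toFinset, q.parts.count t :=
    Finset.sum_le_sum_of_subset h3
  have h5 : ∑ t ∈ q.parts.toFinset, q.parts.count t = Multiset.card q.parts :=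
    Multiset.toFinset_sum_count_eq q.parts
  simp only [smul_eq_mul] at h2
  simp only [numParts]
  have hc : T.card * r = r * T.card := Nat.mul_comm _ _
  omega

lemma Sof_Tof {r : ℕ} (hr : 2 ≤ r) {S : Finset ℕ} (hdvd : ∀ s ∈ S, r ∣ s) :
    Sof r (Tof r S) = S := by
  rw [Sof, Tof, Finset.image_image]
  rw [show ((r * ·) ∘ (· / r)) = fun s => r * (s / r) from rfl]
  conv_rhs => rw [← Finset.image_id (s := S)]
  exact Finset.image_congr fun s hs => Nat.mul_div_cancel' (hdvd s hs)

lemma Tof_Sof {r : ℕ} (hr : 2 ≤ r) (T : Finset ℕ) : Tof r (Sof r T) = T := by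
  rw [Sof, Tof, Finset.image_image]
  rw [show ((· / r) ∘ (r * ·)) = fun t => (r * t) / r from rfl]
  conv_rhs => rw [← Finset.image_id (s := T)]
  exact Finset.image_congr fun t _ => Nat.mul_div_cancel_left t (by omega)

lemma Sof_val {r : ℕ} (hr : 2 ≤ r) (T : Finset ℕ) :
    (Sof r T).val = T.val.map (r * ·) := by
  rw [Sof, Finset.image_val, Multiset.dedup_eq_self.mpr]
  exact Multiset.Nodup.map (fun x y h => Nat.eq_of_mul_eq_mul_left (by omega) h) T.nodup

lemma nsmulTof_val {r : ℕ} (hr : 2 ≤ r) {S : Finset ℕ} (hdvd : ∀ s ∈ S, r ∣ s) :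
    (Tof r S).val = S.val.map (· / r) := by
  rw [Tof, Finset.image_val, Multiset.dedup_eq_self.mpr]
  refine Multiset.Nodup.map_on ?_ S.nodup
  intro x hx y hy hxy
  rw [← Nat.mul_div_cancel' (hdvd x hx), ← Nat.mul_div_cancel' (hdvd y hy), hxy]

lemma bwd_fwd {r : ℕ} {p : Nat.Partition n} {S : Finset ℕ} (hr : 2 ≤ r)
    (hS : S ⊆ Afin r p) (hT : Tof r S ⊆ Dfin r (fwd r p S hr hS)) :
    bwd r (fwd r p S hr hS) (Tof r S) hr hT = p ∧ Sof r (Tof r S) = S := by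
  have hdvd : ∀ s ∈ S, r ∣ s := fun s hs => (mem_Afin.mp (hS hs)).2
  have hSof := Sof_Tof hr hdvd
  constructor
  · apply Nat.Partition.ext
    show ((fwd r p S hr hS).parts - r • (Tof r S).val) + (Sof r (Tof r S)).val = p.parts
    rw [hSof]
    show (((p.parts - S.val) + r • (Tof r S).val) - r • (Tof r S).val) + S.val = p.parts
    rw [add_tsub_cancel_right]
    exact tsub_add_cancel_of_le (sval_le_parts hS)
  · exact hSof

lemma fwd_bwd {r : ℕ} {q : Nat.Partition n} {T : Finset ℕ} (hr : 2 ≤ r)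
    (hT : T ⊆ Dfin r q) (hS : Sof r T ⊆ Afin r (bwd r q T hr hT)) :
    fwd r (bwd r q T hr hT) (Sof r T) hr hS = q ∧ Tof r (Sof r T) = T := by
  have hTof := Tof_Sof hr (r := r) T
  constructor
  · apply Nat.Partition.ext
    show ((bwd r q T hr hT).parts - (Sof r T).val) + r • (Tof r (Sof r T)).val = q.parts
    rw [hTof]
    show (((q.parts - r • T.val) + (Sof r T).val) - (Sof r T).val) + r • T.val = q.parts
    rw [add_tsub_cancel_right]
    exact tsub_add_cancel_of_le (rT_le_parts hT)
  · exact hTof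

/-- The key bijection: pairs (partition, marked subset of distinct parts divisible by `r`)
correspond to pairs (partition, marked subset of distinct parts of multiplicity ≥ `r`),
with the number of parts shifting by `(r-1) * card`. -/
lemma pair_bij {M : Type} [AddCommMonoid M] (r : ℕ) (hr : 2 ≤ r) (n : ℕ) (W : ℕ → ℕ → M) :
    ∑ p : Nat.Partition n, ∑ S ∈ (Afin r p).powerset, W (numParts p) S.card
    = ∑ q : Nat.Partition n, ∑ T ∈ (Dfin r q).powerset,
        W (numParts q - (r - 1) * T.card) T.card := by
  rw [Finset.sum_sigma' Finset.univ (fun p => (Afin r p).powerset)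
    (fun p S => W (numParts p) S.card)]
  rw [Finset.sum_sigma' Finset.univ (fun q => (Dfin r q).powerset)
    (fun q T => W (numParts q - (r - 1) * T.card) T.card)]
  refine Finset.sum_bij'
    (fun a ha => ⟨fwd r a.1 a.2 hr (Finset.mem_powerset.mp (Finset.mem_sigma.mp ha).2),
      Tof r a.2⟩)
    (fun b hb => ⟨bwd r b.1 b.2 hr (Finset.mem_powerset.mp (Finset.mem_sigma.mp hb).2),
      Sof r b.2⟩)
    ?_ ?_ ?_ ?_ ?_
  · rintro ⟨p, S⟩ ha
    have hS := Finset.mem_powerset.mp (Finset.mem_sigma.mp ha).2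
    exact Finset.mem_sigma.mpr ⟨Finset.mem_univ _,
      Finset.mem_powerset.mpr (fwd_mem_D hr hS)⟩
  · rintro ⟨q, T⟩ hb
    have hT := Finset.mem_powerset.mp (Finset.mem_sigma.mp hb).2
    exact Finset.mem_sigma.mpr ⟨Finset.mem_univ _,
      Finset.mem_powerset.mpr (bwd_mem_A hr hT)⟩
  · rintro ⟨p, S⟩ ha
    have hS := Finset.mem_powerset.mp (Finset.mem_sigma.mp ha).2
    obtain ⟨h1, h2⟩ := bwd_fwd hr hS (fwd_mem_D hr hS)
    exact Sigma.ext h1 (heq_of_eq h2)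
  · rintro ⟨q, T⟩ hb
    have hT := Finset.mem_powerset.mp (Finset.mem_sigma.mp hb).2
    obtain ⟨h1, h2⟩ := fwd_bwd hr hT (bwd_mem_A hr hT)
    exact Sigma.ext h1 (heq_of_eq h2)
  · rintro ⟨p, S⟩ ha
    have hS := Finset.mem_powerset.mp (Finset.mem_sigma.mp ha).2
    have hdvd : ∀ s ∈ S, r ∣ s := fun s hs => (mem_Afin.mp (hS hs)).2
    simp only
    rw [card_Tof hr hdvd, numParts_fwd hr hS, Nat.add_sub_cancel]

end BDiffAux
namespace BDiffAux

open Polynomial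

lemma sum_powerset_pow (F : Finset ℕ) :
    ∑ S ∈ F.powerset, ((X : Polynomial ℤ) - 1) ^ S.card = X ^ F.card := by
  have h := Finset.prod_add (fun _ : ℕ => (X : Polynomial ℤ) - 1) (fun _ => 1) F
  simp only [sub_add_cancel, Finset.prod_const, Finset.prod_const_one, mul_one, one_pow] at h
  exact h.symm

lemma sum_powerset_card_pow (F : Finset ℕ) :
    ∑ S ∈ F.powerset, (S.card : Polynomial ℤ) * ((X : Polynomial ℤ) - 1) ^ S.card
      = (F.card : Polynomial ℤ) * (((X : Polynomial ℤ) - 1) * X ^ (F.card - 1)) := by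
  have h := congrArg derivative (sum_powerset_pow F)
  rw [map_sum] at h
  have hterm : ∀ k : ℕ, derivative (((X : Polynomial ℤ) - 1) ^ k)
      = (k : Polynomial ℤ) * ((X : Polynomial ℤ) - 1) ^ (k - 1) := by
    intro k
    rw [derivative_pow]
    simp
  have hX : derivative ((X : Polynomial ℤ) ^ F.card)
      = (F.card : Polynomial ℤ) * X ^ (F.card - 1) := by
    rw [derivative_X_pow]; simp
  simp only [hterm, hX] at h
  have h2 := congrArg (fun q => ((X : Polynomial ℤ) - 1) * q) h
  simp only [Finset.mul_sum] at h2
  calc ∑ S ∈ F.powerset, (S.card : Polynomial ℤ) * ((X : Polynomial ℤ) - 1) ^ S.card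
      = ∑ S ∈ F.powerset,
          ((X : Polynomial ℤ) - 1) * ((S.card : Polynomial ℤ)
            * ((X : Polynomial ℤ) - 1) ^ (S.card - 1)) := by
        refine Finset.sum_congr rfl fun S _ => ?_
        cases' S.card with k
        · simp
        · simp only [Nat.add_sub_cancel]
          rw [pow_succ]
          ring
    _ = ((X : Polynomial ℤ) - 1) * ((F.card : Polynomial ℤ) * X ^ (F.card - 1)) := h2
    _ = (F.card : Polynomial ℤ) * (((X : Polynomial ℤ) - 1) * X ^ (F.card - 1)) := by ring

end BDiffAux
namespace BDiffAux

open Polynomial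

noncomputable def PP (r n : ℕ) : Polynomial ℤ :=
  ∑ p : Nat.Partition n, C (numParts p : ℤ) * X ^ (Afin r p).card

noncomputable def QQ (r n : ℕ) : Polynomial ℤ :=
  ∑ p : Nat.Partition n, C (numParts p : ℤ) * X ^ (Dfin r p).card

noncomputable def RR (r n : ℕ) : Polynomial ℤ :=
  ∑ p : Nat.Partition n, C ((Dfin r p).card : ℤ) * ((X - 1) * X ^ ((Dfin r p).card - 1))

lemma setO_eq (j r n : ℕ) :
    setO j r n = Finset.univ.filter fun p : Nat.Partition n => (Afin r p).card = j := rfl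

lemma setD_eq (j r n : ℕ) :
    setD j r n = Finset.univ.filter fun p : Nat.Partition n => (Dfin r p).card = j := rfl

lemma coeff_sum_CX {n : ℕ} (j : ℕ) (c : Nat.Partition n → ℤ) (g : Nat.Partition n → ℕ) :
    (∑ p : Nat.Partition n, C (c p) * X ^ (g p)).coeff j
      = ∑ p ∈ Finset.univ.filter fun p : Nat.Partition n => g p = j, c p := by
  rw [finset_sum_coeff, Finset.sum_filter]
  refine Finset.sum_congr rfl fun p _ => ?_
  rw [coeff_C_mul, coeff_X_pow]
  split_ifs with h1 h2 h2 <;> simp_all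

lemma coeff_PP (j r n : ℕ) :
    (PP r n).coeff j = ∑ p ∈ setO j r n, (numParts p : ℤ) := by
  rw [PP, coeff_sum_CX, setO_eq]

lemma coeff_QQ (j r n : ℕ) :
    (QQ r n).coeff j = ∑ p ∈ setD j r n, (numParts p : ℤ) := by
  rw [QQ, coeff_sum_CX, setD_eq]

lemma coeff_RR (j r n : ℕ) :
    (RR r n).coeff j
      = (j : ℤ) * ((setD j r n).card : ℤ) - ((j : ℤ) + 1) * ((setD (j + 1) r n).card : ℤ) := by
  have hsplit : RR r n = (∑ p : Nat.Partition n, C ((Dfin r p).card : ℤ) * X ^ (Dfin r p).card)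
      - ∑ p : Nat.Partition n, C ((Dfin r p).card : ℤ) * X ^ ((Dfin r p).card - 1) := by
    rw [RR, ← Finset.sum_sub_distrib]
    refine Finset.sum_congr rfl fun p _ => ?_
    rcases Nat.eq_zero_or_pos (Dfin r p).card with h | h
    · simp [h]
    · obtain ⟨k, hk⟩ := Nat.exists_eq_add_of_le h
      rw [hk]
      have h1 : 1 + k - 1 = k := by omega
      rw [h1, pow_add, pow_one]
      ring
  rw [hsplit, coeff_sub]
  have h1 : (∑ p : Nat.Partition n, C ((Dfin r p).card : ℤ) * X ^ (Dfin r p).card).coeff j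
      = (j : ℤ) * ((setD j r n).card : ℤ) := by
    rw [coeff_sum_CX, ← setD_eq, Finset.sum_congr rfl
      (fun p hp => by
        rw [setD_eq, Finset.mem_filter] at hp
        rw [hp.2] : ∀ p ∈ setD j r n, ((Dfin r p).card : ℤ) = (j : ℤ))]
    rw [Finset.sum_const, nsmul_eq_mul, mul_comm]
  have h2 : (∑ p : Nat.Partition n, C ((Dfin r p).card : ℤ) * X ^ ((Dfin r p).card - 1)).coeff j
      = ((j : ℤ) + 1) * ((setD (j + 1) r n).card : ℤ) := by
    rw [coeff_sum_CX]
    have : ∑ p ∈ Finset.univ.filter fun p : Nat.Partition n => (Dfin r p).card - 1 = j,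
        ((Dfin r p).card : ℤ)
        = ∑ p : Nat.Partition n,
            if (Dfin r p).card = j + 1 then ((j : ℤ) + 1) else 0 := by
      rw [Finset.sum_filter]
      refine Finset.sum_congr rfl fun p _ => ?_
      rcases Nat.eq_zero_or_pos (Dfin r p).card with h | h
      · split_ifs <;> simp_all <;> omega
      · have hiff : ((Dfin r p).card - 1 = j) ↔ ((Dfin r p).card = j + 1) := by omega
        split_ifs with ha hb hb
        · push_cast [hb]; ring
        · exact absurd (hiff.mp ha) hb
        · exact absurd (hiff.mpr hb) ha
        · rfl
    rw [this, ← Finset.sum_filter, ← setD_eq, Finset.sum_const, nsmul_eq_mul, mul_comm]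
  rw [h1, h2]

set_option maxHeartbeats 1600000 in
lemma PP_eq (r n : ℕ) (hr : 2 ≤ r) :
    PP r n = QQ r n - C ((r : ℤ) - 1) * RR r n := by
  have step1 : PP r n = ∑ p : Nat.Partition n, ∑ S ∈ (Afin r p).powerset,
      C (numParts p : ℤ) * ((X : Polynomial ℤ) - 1) ^ S.card := by
    rw [PP]
    refine Finset.sum_congr rfl fun p _ => ?_
    rw [← sum_powerset_pow, Finset.mul_sum]
  have step2 : (∑ p : Nat.Partition n, ∑ S ∈ (Afin r p).powerset,
      C (numParts p : ℤ) * ((X : Polynomial ℤ) - 1) ^ S.card)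
      = ∑ q : Nat.Partition n, ∑ T ∈ (Dfin r q).powerset,
        C ((numParts q - (r - 1) * T.card : ℕ) : ℤ) * ((X : Polynomial ℤ) - 1) ^ T.card :=
    pair_bij r hr n (fun a b => C (a : ℤ) * ((X : Polynomial ℤ) - 1) ^ b)
  have step3 : (∑ q : Nat.Partition n, ∑ T ∈ (Dfin r q).powerset,
      C ((numParts q - (r - 1) * T.card : ℕ) : ℤ) * ((X : Polynomial ℤ) - 1) ^ T.card)
      = ∑ q : Nat.Partition n, ∑ T ∈ (Dfin r q).powerset,
        (C (numParts q : ℤ) * ((X : Polynomial ℤ) - 1) ^ T.card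
          - C ((r : ℤ) - 1) * ((T.card : Polynomial ℤ) * ((X : Polynomial ℤ) - 1) ^ T.card)) := by
    refine Finset.sum_congr rfl fun q _ => Finset.sum_congr rfl fun T hT => ?_
    have hle1 : r * T.card ≤ numParts q := card_le_numParts hr (Finset.mem_powerset.mp hT)
    have hle2 : (r - 1) * T.card ≤ numParts q :=
      le_trans (Nat.mul_le_mul_right T.card (Nat.sub_le r 1)) hle1
    rw [Nat.cast_sub hle2, Nat.cast_mul, Nat.cast_sub (by omega : 1 ≤ r)]
    rw [map_sub, map_mul, sub_mul]
    simp [Polynomial.C_eq_natCast, mul_assoc]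
  have step4 : (∑ q : Nat.Partition n, ∑ T ∈ (Dfin r q).powerset,
      (C (numParts q : ℤ) * ((X : Polynomial ℤ) - 1) ^ T.card
        - C ((r : ℤ) - 1) * ((T.card : Polynomial ℤ) * ((X : Polynomial ℤ) - 1) ^ T.card)))
      = QQ r n - C ((r : ℤ) - 1) * RR r n := by
    rw [Finset.sum_congr rfl (fun q _ => Finset.sum_sub_distrib _ _), Finset.sum_sub_distrib]
    congr 1
    · rw [QQ]
      refine Finset.sum_congr rfl fun q _ => ?_
      rw [← Finset.mul_sum, sum_powerset_pow]
    · rw [RR, Finset.mul_sum]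
      refine Finset.sum_congr rfl fun q _ => ?_
      rw [← Finset.mul_sum, sum_powerset_card_pow]
      simp [Polynomial.C_eq_natCast]
  rw [step1, step2, step3, step4]

end BDiffAux
/-- `b_{j,r}(n) = (r-1)·((j+1)·|D_{j+1,r}(n)| - j·|D_{j,r}(n)|)`. -/
theorem bDiff_eq_D (n j r : ℕ) (hr : 2 ≤ r) :
    bDiff j r n =
      ((r : ℤ) - 1) *
        (((j : ℤ) + 1) * ((setD (j + 1) r n).card : ℤ) - (j : ℤ) * ((setD j r n).card : ℤ)) := by
  have h := congrArg (fun q => Polynomial.coeff q j) (BDiffAux.PP_eq r n hr)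
  simp only [Polynomial.coeff_sub, Polynomial.coeff_C_mul] at h
  rw [BDiffAux.coeff_PP, BDiffAux.coeff_QQ, BDiffAux.coeff_RR] at h
  rw [bDiff, h]
  ring
end

section
/- For all non-negative integers n, j and all integers r ≥ 2, the sum over t = 1, 2, …, r−1 of E_{j,r,t}(n) equals b_{j,r}(n). -/
open Finset

namespace GlaisherAux


/-- the `k`-th base-`r` digit of `c` -/
def gdig (r k c : ℕ) : ℕ := c / r ^ k % r

/-- `r`-adic valuation -/
def kv (r i : ℕ) : ℕ := Nat.maxPowDiv r i

/-- `r`-free part -/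
def mv (r i : ℕ) : ℕ := i / r ^ Nat.maxPowDiv r i

variable {r : ℕ}

lemma gdig_lt (hr : 2 ≤ r) (k c : ℕ) : gdig r k c < r :=
  Nat.mod_lt _ (by omega)

lemma gdig_eq_zero {k c : ℕ} (h : c < r ^ k) : gdig r k c = 0 := by
  unfold gdig
  rw [Nat.div_eq_of_lt h, Nat.zero_mod]

lemma lt_pow (hr : 2 ≤ r) {a b : ℕ} (h : a ≤ b) : a < r ^ b :=
  lt_of_lt_of_le (lt_of_le_of_lt h (Nat.lt_two_pow_self (n := b))) (Nat.pow_le_pow_left hr b)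

lemma gdig_eq_zero_of_le (hr : 2 ≤ r) {k c : ℕ} (h : c ≤ k) : gdig r k c = 0 :=
  gdig_eq_zero (lt_pow hr h)

lemma gdig_zero (c : ℕ) : gdig r 0 c = c % r := by
  unfold gdig; rw [pow_zero, Nat.div_one]

lemma gdig_succ (k c : ℕ) : gdig r (k + 1) c = gdig r k (c / r) := by
  unfold gdig
  rw [pow_succ', Nat.div_div_eq_div_mul]

lemma digitsum (hr : 2 ≤ r) : ∀ (K c : ℕ), c < r ^ K →
    ∑ k ∈ range K, r ^ k * gdig r k c = c := by
  intro K
  induction K with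
  | zero => intro c hc; rw [pow_zero] at hc; interval_cases c; simp
  | succ K ih =>
    intro c hc
    rw [Finset.sum_range_succ']
    have h1 : ∀ k, r ^ (k + 1) * gdig r (k + 1) c = r * (r ^ k * gdig r k (c / r)) := by
      intro k; rw [gdig_succ]; ring
    rw [Finset.sum_congr rfl fun k _ => h1 k, ← Finset.mul_sum,
      ih (c / r) (by rw [Nat.div_lt_iff_lt_mul (by omega : 0 < r)]; rw [pow_succ] at hc; omega),
      pow_zero, one_mul, gdig_zero]
    have := Nat.div_add_mod c r
    omega

lemma gdig_sum (hr : 2 ≤ r) : ∀ (K : ℕ) (e : ℕ → ℕ), (∀ k, e k < r) → ∀ (t : ℕ),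
    gdig r t (∑ k ∈ range K, r ^ k * e k) = if t < K then e t else 0 := by
  intro K
  induction K with
  | zero =>
    intro e he t
    simp [gdig]
  | succ K ih =>
    intro e he t
    have hsplit : ∑ k ∈ range (K + 1), r ^ k * e k
        = e 0 + r * ∑ k ∈ range K, r ^ k * e (k + 1) := by
      rw [Finset.sum_range_succ', pow_zero, one_mul, add_comm]
      congr 1
      rw [Finset.mul_sum]
      exact Finset.sum_congr rfl fun k _ => by ring
    rw [hsplit]
    match t with
    | 0 =>
      rw [gdig_zero, Nat.add_mul_mod_self_left, Nat.mod_eq_of_lt (he 0)]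
      simp
    | t + 1 =>
      rw [gdig_succ, Nat.add_mul_div_left _ _ (by omega : 0 < r),
        Nat.div_eq_of_lt (he 0), zero_add, ih (fun k => e (k + 1)) (fun k => he (k + 1)) t]
      simp [Nat.succ_lt_succ_iff]

lemma mv_mul_pow (hr : 2 ≤ r) (i : ℕ) : mv r i * r ^ kv r i = i :=
  Nat.div_mul_cancel (Nat.maxPowDiv.pow_dvd (p := r) (n := i))

lemma mv_pos (hr : 2 ≤ r) {i : ℕ} (hi : 0 < i) : 0 < mv r i := by
  rcases Nat.eq_zero_or_pos (mv r i) with h | h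
  · exfalso; have := mv_mul_pow hr i; rw [h, zero_mul] at this; omega
  · exact h

lemma not_dvd_mv (hr : 2 ≤ r) {i : ℕ} (hi : 0 < i) : ¬ r ∣ mv r i := by
  rintro ⟨u, hu⟩
  have h1 : r ^ (kv r i + 1) ∣ i := by
    refine ⟨u, ?_⟩
    calc i = mv r i * r ^ kv r i := (mv_mul_pow hr i).symm
    _ = r * u * r ^ kv r i := by rw [hu]
    _ = r ^ (kv r i + 1) * u := by ring
  have : kv r i + 1 ≤ kv r i := 
    (Nat.pow_dvd_iff_le_padicValNat (p := r) (n := i) (by omega) (by omega)).mp h1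
  unfold kv at this; omega

lemma kv_mul_pow (hr : 2 ≤ r) {m : ℕ} (hm : 0 < m) (hnd : ¬ r ∣ m) (k : ℕ) :
    kv r (m * r ^ k) = k := by
  have h0 : Nat.maxPowDiv r m = 0 := by
    by_contra h
    exact hnd (dvd_trans (dvd_pow_self r h) (Nat.maxPowDiv.pow_dvd (p := r) (n := m)))
  unfold kv
  rw [mul_comm, Nat.maxPowDiv, Nat.maxPowDiv.base_pow_mul (by omega) (by omega), ← Nat.maxPowDiv, h0,
    zero_add]

lemma mv_mul_pow_eq (hr : 2 ≤ r) {m : ℕ} (hm : 0 < m) (hnd : ¬ r ∣ m) (k : ℕ) :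
    mv r (m * r ^ k) = m := by
  unfold mv
  rw [show Nat.maxPowDiv r (m * r ^ k) = kv r (m * r ^ k) from rfl, kv_mul_pow hr hm hnd k,
    Nat.mul_div_cancel _ (Nat.pow_pos (by omega))]

/-- The Glaisher-type map on multisets. -/
def PhiM (r : ℕ) (s : Multiset ℕ) : Multiset ℕ :=
  ∑ i ∈ s.toFinset, if r ∣ i then Multiset.replicate (r * s.count i) (i / r)
    else ∑ k ∈ range (s.count i), Multiset.replicate (gdig r k (s.count i)) (i * r ^ k)

/-- Its inverse. -/
def PsiM (r : ℕ) (s : Multiset ℕ) : Multiset ℕ :=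
  ∑ i ∈ s.toFinset, (Multiset.replicate (s.count i / r) (i * r)
    + Multiset.replicate (r ^ kv r i * (s.count i % r)) (mv r i))

lemma msum_finset_sum {β : Type*} [DecidableEq β] (s : Finset β) (f : β → Multiset ℕ) :
    (∑ b ∈ s, f b).sum = ∑ b ∈ s, (f b).sum := by
  induction s using Finset.induction with
  | empty => simp
  | insert _ _ h ih => rw [Finset.sum_insert h, Finset.sum_insert h, Multiset.sum_add, ih]

lemma sum_count_mul (s : Multiset ℕ) : ∑ i ∈ s.toFinset, s.count i * i = s.sum := by
  conv_rhs => rw [← Multiset.toFinset_sum_count_nsmul_eq s]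
  rw [msum_finset_sum]
  refine Finset.sum_congr rfl fun i _ => ?_
  rw [Multiset.nsmul_singleton, Multiset.sum_replicate, smul_eq_mul]

lemma card_le_sum {s : Multiset ℕ} (hs : ∀ i ∈ s, 0 < i) : Multiset.card s ≤ s.sum := by
  induction s using Multiset.induction_on with
  | empty => simp
  | cons a t ih =>
    rw [Multiset.card_cons, Multiset.sum_cons]
    have h1 : 0 < a := hs a (Multiset.mem_cons_self a t)
    have h2 := ih (fun i hi => hs i (Multiset.mem_cons_of_mem hi))
    omega

lemma count_PhiM (hr : 2 ≤ r) (s : Multiset ℕ) (hs : ∀ i ∈ s, 0 < i) {j : ℕ} (hj : 0 < j) :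
    (PhiM r s).count j = r * s.count (j * r) + gdig r (kv r j) (s.count (mv r j)) := by
  have hrpos : 0 < r := by omega
  have hmvj : 0 < mv r j := mv_pos hr hj
  have hmvnd : ¬ r ∣ mv r j := not_dvd_mv hr hj
  have hmvj_eq : mv r j * r ^ kv r j = j := mv_mul_pow hr j
  rw [PhiM, Multiset.count_sum']
  have key : ∀ i ∈ s.toFinset,
      Multiset.count j (if r ∣ i then Multiset.replicate (r * s.count i) (i / r)
        else ∑ k ∈ range (s.count i), Multiset.replicate (gdig r k (s.count i)) (i * r ^ k))
      = (if i = j * r then r * s.count i else 0)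
        + (if i = mv r j then gdig r (kv r j) (s.count i) else 0) := by
    intro i hi
    have hipos : 0 < i := hs i (Multiset.mem_toFinset.mp hi)
    by_cases hd : r ∣ i
    · rw [if_pos hd, Multiset.count_replicate]
      have hne : i ≠ mv r j := fun h => hmvnd (h ▸ hd)
      rw [if_neg hne, add_zero]
      by_cases h1 : i / r = j
      · rw [if_pos h1, if_pos (by rw [← h1, Nat.div_mul_cancel hd])]
      · rw [if_neg h1, if_neg (fun h => h1 (by rw [h, Nat.mul_div_cancel _ hrpos]))]
    · rw [if_neg hd, Multiset.count_sum']
      have hne2 : i ≠ j * r := fun h => hd (h ▸ dvd_mul_left r j)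
      rw [if_neg hne2, zero_add]
      by_cases hm : i = mv r j
      · have hterm : ∀ k ∈ range (s.count i),
            Multiset.count j (Multiset.replicate (gdig r k (s.count i)) (i * r ^ k))
            = if k = kv r j then gdig r k (s.count i) else 0 := by
          intro k _
          rw [Multiset.count_replicate]
          by_cases hk : k = kv r j
          · rw [if_pos hk, if_pos (by rw [hm, hk, hmvj_eq])]
          · rw [if_neg hk, if_neg]
            intro h
            apply hk
            rw [hm] at h
            have := h.trans hmvj_eq.symm
            exact Nat.pow_right_injective hr (Nat.eq_of_mul_eq_mul_left hmvj this)
        rw [Finset.sum_congr rfl hterm, Finset.sum_ite_eq' (range (s.count i)) (kv r j), if_pos hm]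
        by_cases hin : kv r j ∈ range (s.count i)
        · rw [if_pos hin]
        · rw [if_neg hin,
            gdig_eq_zero_of_le hr (by simp only [Finset.mem_range, not_lt] at hin; exact hin)]
      · rw [if_neg hm]
        refine Finset.sum_eq_zero fun k _ => ?_
        rw [Multiset.count_replicate, if_neg]
        intro h
        apply hm
        rw [← h, mv_mul_pow_eq hr hipos hd k]
  rw [Finset.sum_congr rfl key, Finset.sum_add_distrib,
    Finset.sum_ite_eq' s.toFinset (j * r), Finset.sum_ite_eq' s.toFinset (mv r j)]
  congr 1
  · by_cases h : j * r ∈ s.toFinset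
    · rw [if_pos h]
    · rw [if_neg h, Multiset.count_eq_zero_of_notMem (fun hc => h (Multiset.mem_toFinset.mpr hc)),
        mul_zero]
  · by_cases h : mv r j ∈ s.toFinset
    · rw [if_pos h]
    · rw [if_neg h, Multiset.count_eq_zero_of_notMem (fun hc => h (Multiset.mem_toFinset.mpr hc)),
        gdig_eq_zero_of_le hr (Nat.zero_le _)]

lemma count_PsiM (hr : 2 ≤ r) (s : Multiset ℕ) (hs : ∀ i ∈ s, 0 < i) {j : ℕ} (hj : 0 < j) :
    (PsiM r s).count j = if r ∣ j then s.count (j / r) / r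
      else ∑ k ∈ range (s.sum + 1), r ^ k * (s.count (j * r ^ k) % r) := by
  have hrpos : 0 < r := by omega
  rw [PsiM, Multiset.count_sum']
  by_cases hdj : r ∣ j
  · rw [if_pos hdj]
    have key : ∀ i ∈ s.toFinset,
        Multiset.count j (Multiset.replicate (s.count i / r) (i * r)
          + Multiset.replicate (r ^ kv r i * (s.count i % r)) (mv r i))
        = if i = j / r then s.count i / r else 0 := by
      intro i hi
      have hipos : 0 < i := hs i (Multiset.mem_toFinset.mp hi)
      rw [Multiset.count_add, Multiset.count_replicate, Multiset.count_replicate]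
      have h2 : mv r i ≠ j := fun h => not_dvd_mv hr hipos (h ▸ hdj)
      rw [if_neg h2, add_zero]
      by_cases h1 : i * r = j
      · rw [if_pos h1, if_pos (by rw [← h1, Nat.mul_div_cancel _ hrpos])]
      · rw [if_neg h1, if_neg (fun h => h1 (by rw [h, Nat.div_mul_cancel hdj]))]
    rw [Finset.sum_congr rfl key, Finset.sum_ite_eq' s.toFinset (j / r)]
    by_cases h : j / r ∈ s.toFinset
    · rw [if_pos h]
    · rw [if_neg h,
        Multiset.count_eq_zero_of_notMem (fun hc => h (Multiset.mem_toFinset.mpr hc)),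
        Nat.zero_div]
  · rw [if_neg hdj]
    have key : ∀ i ∈ s.toFinset,
        Multiset.count j (Multiset.replicate (s.count i / r) (i * r)
          + Multiset.replicate (r ^ kv r i * (s.count i % r)) (mv r i))
        = if mv r i = j then r ^ kv r i * (s.count i % r) else 0 := by
      intro i hi
      rw [Multiset.count_add, Multiset.count_replicate, Multiset.count_replicate,
        if_neg (fun h : i * r = j => hdj (h ▸ dvd_mul_left r i)), zero_add]
    rw [Finset.sum_congr rfl key, ← Finset.sum_filter]
    have hne : ∀ k ∈ range (s.sum + 1), r ^ k * (s.count (j * r ^ k) % r) ≠ 0 →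
        j * r ^ k ∈ s.toFinset := by
      intro k _ h
      by_contra hmem
      apply h
      rw [Multiset.count_eq_zero_of_notMem (fun hc => hmem (Multiset.mem_toFinset.mpr hc)),
        Nat.zero_mod, mul_zero]
    rw [← Finset.sum_filter_of_ne hne]
    refine Finset.sum_nbij' (fun i => kv r i) (fun k => j * r ^ k) ?_ ?_ ?_ ?_ ?_
    · intro a ha
      rw [Finset.mem_filter] at ha
      obtain ⟨ha1, ha2⟩ := ha
      have hapos : 0 < a := hs a (Multiset.mem_toFinset.mp ha1)
      have hja : j * r ^ kv r a = a := by rw [← ha2]; exact mv_mul_pow hr a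
      show kv r a ∈ Finset.filter _ _
      rw [Finset.mem_filter, Finset.mem_range]
      constructor
      · have h1 : r ^ kv r a ≤ a := by
          conv_rhs => rw [← mv_mul_pow hr a]
          exact Nat.le_mul_of_pos_left _ (mv_pos hr hapos)
        have h2 : a ≤ s.sum :=
          Multiset.single_le_sum (fun x _ => Nat.zero_le x) a (Multiset.mem_toFinset.mp ha1)
        have h3 : kv r a < r ^ kv r a := lt_pow hr (le_refl _)
        omega
      · rw [hja]; exact ha1
    · intro k hk
      rw [Finset.mem_filter] at hk
      show j * r ^ k ∈ Finset.filter _ _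
      rw [Finset.mem_filter]
      exact ⟨hk.2, mv_mul_pow_eq hr hj hdj k⟩
    · intro a ha
      rw [Finset.mem_filter] at ha
      show j * r ^ kv r a = a
      rw [← ha.2]; exact mv_mul_pow hr a
    · intro k hk
      show kv r (j * r ^ k) = k
      exact kv_mul_pow hr hj hdj k
    · intro a ha
      rw [Finset.mem_filter] at ha
      have hja : j * r ^ kv r a = a := by rw [← ha.2]; exact mv_mul_pow hr a
      show r ^ kv r a * (s.count a % r) = r ^ kv r a * (s.count (j * r ^ kv r a) % r)
      rw [hja]

lemma pos_PhiM (hr : 2 ≤ r) (s : Multiset ℕ) (hs : ∀ i ∈ s, 0 < i) :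
    ∀ j ∈ PhiM r s, 0 < j := by
  intro j hj
  rw [PhiM] at hj
  obtain ⟨i, hi, hmem⟩ := Multiset.mem_sum.mp hj
  have hipos : 0 < i := hs i (Multiset.mem_toFinset.mp hi)
  by_cases hd : r ∣ i
  · rw [if_pos hd] at hmem
    rw [Multiset.eq_of_mem_replicate hmem]
    exact Nat.div_pos (Nat.le_of_dvd hipos hd) (by omega)
  · rw [if_neg hd] at hmem
    obtain ⟨k, _, hmem2⟩ := Multiset.mem_sum.mp hmem
    rw [Multiset.eq_of_mem_replicate hmem2]
    exact Nat.mul_pos hipos (Nat.pow_pos (by omega))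

lemma sum_PhiM (hr : 2 ≤ r) (s : Multiset ℕ) (hs : ∀ i ∈ s, 0 < i) :
    (PhiM r s).sum = s.sum := by
  rw [PhiM, msum_finset_sum, ← sum_count_mul s]
  refine Finset.sum_congr rfl fun i hi => ?_
  by_cases hd : r ∣ i
  · rw [if_pos hd, Multiset.sum_replicate, smul_eq_mul]
    calc r * s.count i * (i / r) = s.count i * (r * (i / r)) := by ring
    _ = s.count i * i := by rw [Nat.mul_div_cancel' hd]
  · rw [if_neg hd, msum_finset_sum]
    have h1 : ∀ k ∈ range (s.count i),
        (Multiset.replicate (gdig r k (s.count i)) (i * r ^ k)).sum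
        = i * (r ^ k * gdig r k (s.count i)) := by
      intro k _
      rw [Multiset.sum_replicate, smul_eq_mul]
      ring
    rw [Finset.sum_congr rfl h1, ← Finset.mul_sum,
      digitsum hr _ _ (lt_pow hr (le_refl _)), mul_comm]

lemma pos_PsiM (hr : 2 ≤ r) (s : Multiset ℕ) (hs : ∀ i ∈ s, 0 < i) :
    ∀ j ∈ PsiM r s, 0 < j := by
  intro j hj
  rw [PsiM] at hj
  obtain ⟨i, hi, hmem⟩ := Multiset.mem_sum.mp hj
  have hipos : 0 < i := hs i (Multiset.mem_toFinset.mp hi)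
  rw [Multiset.mem_add] at hmem
  rcases hmem with h | h
  · rw [Multiset.eq_of_mem_replicate h]
    exact Nat.mul_pos hipos (by omega)
  · rw [Multiset.eq_of_mem_replicate h]
    exact mv_pos hr hipos

lemma sum_PsiM (hr : 2 ≤ r) (s : Multiset ℕ) (hs : ∀ i ∈ s, 0 < i) :
    (PsiM r s).sum = s.sum := by
  rw [PsiM, msum_finset_sum, ← sum_count_mul s]
  refine Finset.sum_congr rfl fun i hi => ?_
  have h1 : mv r i * r ^ kv r i = i := mv_mul_pow hr i
  rw [Multiset.sum_add, Multiset.sum_replicate, Multiset.sum_replicate, smul_eq_mul, smul_eq_mul]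
  have h2 := Nat.div_add_mod (s.count i) r
  calc s.count i / r * (i * r) + r ^ kv r i * (s.count i % r) * mv r i
      = r * (s.count i / r) * i + s.count i % r * (mv r i * r ^ kv r i) := by ring
    _ = r * (s.count i / r) * i + s.count i % r * i := by rw [h1]
    _ = (r * (s.count i / r) + s.count i % r) * i := by ring
    _ = s.count i * i := by rw [h2]

lemma PsiPhi (hr : 2 ≤ r) (s : Multiset ℕ) (hs : ∀ i ∈ s, 0 < i) :
    PsiM r (PhiM r s) = s := by
  have hsPhi := pos_PhiM hr s hs
  refine Multiset.ext.mpr fun j => ?_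
  rcases Nat.eq_zero_or_pos j with rfl | hj
  · rw [Multiset.count_eq_zero_of_notMem (fun h => lt_irrefl 0 (pos_PsiM hr _ hsPhi 0 h)),
      Multiset.count_eq_zero_of_notMem (fun h => lt_irrefl 0 (hs 0 h))]
  · rw [count_PsiM hr _ hsPhi hj]
    by_cases hdj : r ∣ j
    · rw [if_pos hdj]
      have hjr : 0 < j / r := Nat.div_pos (Nat.le_of_dvd hj hdj) (by omega)
      rw [count_PhiM hr s hs hjr, Nat.div_mul_cancel hdj,
        Nat.mul_add_div (by omega : 0 < r), Nat.div_eq_of_lt (gdig_lt hr _ _), add_zero]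
    · rw [if_neg hdj]
      have hterm : ∀ k ∈ range ((PhiM r s).sum + 1),
          r ^ k * ((PhiM r s).count (j * r ^ k) % r) = r ^ k * gdig r k (s.count j) := by
        intro k _
        have hjk : 0 < j * r ^ k := Nat.mul_pos hj (Nat.pow_pos (by omega))
        rw [count_PhiM hr s hs hjk, kv_mul_pow hr hj hdj k, mv_mul_pow_eq hr hj hdj k,
          Nat.mul_add_mod, Nat.mod_eq_of_lt (gdig_lt hr _ _)]
      rw [Finset.sum_congr rfl hterm, sum_PhiM hr s hs]
      exact digitsum hr _ _ (lt_of_le_of_lt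
        (le_trans (Multiset.count_le_card j s) (card_le_sum hs)) (lt_pow hr (Nat.le_succ _)))

lemma PhiPsi (hr : 2 ≤ r) (s : Multiset ℕ) (hs : ∀ i ∈ s, 0 < i) :
    PhiM r (PsiM r s) = s := by
  have hsPsi := pos_PsiM hr s hs
  refine Multiset.ext.mpr fun j => ?_
  rcases Nat.eq_zero_or_pos j with rfl | hj
  · rw [Multiset.count_eq_zero_of_notMem (fun h => lt_irrefl 0 (pos_PhiM hr _ hsPsi 0 h)),
      Multiset.count_eq_zero_of_notMem (fun h => lt_irrefl 0 (hs 0 h))]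
  · rw [count_PhiM hr _ hsPsi hj]
    have hjr : 0 < j * r := Nat.mul_pos hj (by omega)
    rw [count_PsiM hr s hs hjr, if_pos (dvd_mul_left r j),
      Nat.mul_div_cancel _ (by omega : 0 < r)]
    have hmv : 0 < mv r j := mv_pos hr hj
    have hmvnd := not_dvd_mv hr hj
    rw [count_PsiM hr s hs hmv, if_neg hmvnd,
      gdig_sum hr (s.sum + 1) _ (fun k => Nat.mod_lt _ (by omega)) (kv r j)]
    by_cases hc : s.count j = 0
    · rw [mv_mul_pow hr j, hc]
      simp
    · have hmem : j ∈ s := by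
        rw [← Multiset.count_pos]
        omega
      have hjle : j ≤ s.sum := Multiset.single_le_sum (fun x _ => Nat.zero_le x) j hmem
      have hkv : kv r j < s.sum + 1 := by
        have h1 : r ^ kv r j ≤ j := by
          conv_rhs => rw [← mv_mul_pow hr j]
          exact Nat.le_mul_of_pos_left _ hmv
        have h2 : kv r j < r ^ kv r j := lt_pow hr (le_refl _)
        omega
      rw [if_pos hkv, mv_mul_pow hr j]
      have := Nat.div_add_mod (s.count j) r
      omega

lemma statD (hr : 2 ≤ r) (s : Multiset ℕ) (hs : ∀ i ∈ s, 0 < i) :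
    ((PhiM r s).toFinset.filter fun i => r ≤ (PhiM r s).count i).card
      = (s.toFinset.filter fun i => r ∣ i).card := by
  refine Finset.card_bij' (fun a _ => a * r) (fun b _ => b / r) ?_ ?_ ?_ ?_
  · intro a ha
    rw [Finset.mem_filter] at ha
    obtain ⟨ha1, ha2⟩ := ha
    have hapos : 0 < a := pos_PhiM hr s hs a (Multiset.mem_toFinset.mp ha1)
    rw [count_PhiM hr s hs hapos] at ha2
    have hd := gdig_lt hr (kv r a) (s.count (mv r a))
    have hc : 0 < s.count (a * r) := by
      rcases Nat.eq_zero_or_pos (s.count (a * r)) with h | h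
      · rw [h, mul_zero] at ha2; omega
      · exact h
    show a * r ∈ Finset.filter _ _
    rw [Finset.mem_filter]
    exact ⟨Multiset.mem_toFinset.mpr (Multiset.count_pos.mp hc), dvd_mul_left r a⟩
  · intro b hb
    rw [Finset.mem_filter] at hb
    obtain ⟨hb1, hb2⟩ := hb
    have hbpos : 0 < b := hs b (Multiset.mem_toFinset.mp hb1)
    have hbr : 0 < b / r := Nat.div_pos (Nat.le_of_dvd hbpos hb2) (by omega)
    have hcb : 0 < s.count b := Multiset.count_pos.mpr (Multiset.mem_toFinset.mp hb1)
    have hcnt : r ≤ (PhiM r s).count (b / r) := by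
      rw [count_PhiM hr s hs hbr, Nat.div_mul_cancel hb2]
      have h1 : r * 1 ≤ r * s.count b := Nat.mul_le_mul_left r hcb
      omega
    show b / r ∈ Finset.filter _ _
    rw [Finset.mem_filter]
    exact ⟨Multiset.mem_toFinset.mpr (Multiset.count_pos.mp (by omega)), hcnt⟩
  · intro a _
    show a * r / r = a
    exact Nat.mul_div_cancel a (by omega)
  · intro b hb
    rw [Finset.mem_filter] at hb
    show b / r * r = b
    exact Nat.div_mul_cancel hb.2

lemma statSum (hr : 2 ≤ r) (s : Multiset ℕ) (hs : ∀ i ∈ s, 0 < i) :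
    ∑ i ∈ (PhiM r s).toFinset, (PhiM r s).count i / r
      = Multiset.card (s.filter fun i => i % r = 0) := by
  have h1 : Multiset.card (s.filter fun i => i % r = 0)
      = ∑ i ∈ s.toFinset.filter (fun i => r ∣ i), s.count i := by
    rw [← Multiset.toFinset_sum_count_eq (s.filter fun i => i % r = 0),
      Multiset.toFinset_filter]
    have hset : s.toFinset.filter (fun i => i % r = 0) = s.toFinset.filter (fun i => r ∣ i) :=
      Finset.filter_congr fun x _ => (Nat.dvd_iff_mod_eq_zero).symm
    rw [hset]
    refine Finset.sum_congr rfl fun i hi => ?_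
    rw [Finset.mem_filter] at hi
    rw [Multiset.count_filter, if_pos (Nat.dvd_iff_mod_eq_zero.mp hi.2)]
  rw [h1]
  have h2 : ∀ a ∈ (PhiM r s).toFinset, (PhiM r s).count a / r = s.count (a * r) := by
    intro a ha
    have hapos : 0 < a := pos_PhiM hr s hs a (Multiset.mem_toFinset.mp ha)
    rw [count_PhiM hr s hs hapos, Nat.mul_add_div (by omega : 0 < r),
      Nat.div_eq_of_lt (gdig_lt hr _ _), add_zero]
  rw [Finset.sum_congr rfl h2]
  have hne : ∀ a ∈ (PhiM r s).toFinset, s.count (a * r) ≠ 0 → a * r ∈ s.toFinset := by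
    intro a _ h
    exact Multiset.mem_toFinset.mpr (Multiset.count_pos.mp (Nat.pos_of_ne_zero h))
  rw [← Finset.sum_filter_of_ne hne]
  refine Finset.sum_nbij' (fun a => a * r) (fun b => b / r) ?_ ?_ ?_ ?_ ?_
  · intro a ha
    rw [Finset.mem_filter] at ha
    show a * r ∈ Finset.filter _ _
    rw [Finset.mem_filter]
    exact ⟨ha.2, dvd_mul_left r a⟩
  · intro b hb
    rw [Finset.mem_filter] at hb
    obtain ⟨hb1, hb2⟩ := hb
    have hbpos : 0 < b := hs b (Multiset.mem_toFinset.mp hb1)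
    have hbr : 0 < b / r := Nat.div_pos (Nat.le_of_dvd hbpos hb2) (by omega)
    have hcb : 0 < s.count b := Multiset.count_pos.mpr (Multiset.mem_toFinset.mp hb1)
    have hcnt : 0 < (PhiM r s).count (b / r) := by
      rw [count_PhiM hr s hs hbr, Nat.div_mul_cancel hb2]
      have h1 : r * 1 ≤ r * s.count b := Nat.mul_le_mul_left r hcb
      omega
    show b / r ∈ Finset.filter _ _
    rw [Finset.mem_filter, Nat.div_mul_cancel hb2]
    exact ⟨Multiset.mem_toFinset.mpr (Multiset.count_pos.mp hcnt), hb1⟩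
  · intro a _
    show a * r / r = a
    exact Nat.mul_div_cancel a (by omega)
  · intro b hb
    rw [Finset.mem_filter] at hb
    show b / r * r = b
    exact Nat.div_mul_cancel hb.2
  · intro a _
    rfl



-- partition-level constructions and statistics

/-- The Glaisher-type bijection at the level of partitions. -/
def PhiP {r : ℕ} (hr : 2 ≤ r) {n : ℕ} (p : Nat.Partition n) : Nat.Partition n where
  parts := PhiM r p.parts
  parts_pos := fun {i} hi => pos_PhiM hr p.parts (fun _ h => p.parts_pos h) i hi
  parts_sum := by
    rw [sum_PhiM hr p.parts (fun _ h => p.parts_pos h)]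
    exact p.parts_sum

/-- Its inverse. -/
def PsiP {r : ℕ} (hr : 2 ≤ r) {n : ℕ} (p : Nat.Partition n) : Nat.Partition n where
  parts := PsiM r p.parts
  parts_pos := fun {i} hi => pos_PsiM hr p.parts (fun _ h => p.parts_pos h) i hi
  parts_sum := by
    rw [sum_PsiM hr p.parts (fun _ h => p.parts_pos h)]
    exact p.parts_sum

lemma key_sum {r : ℕ} (hr : 2 ≤ r) (j n : ℕ) :
    ∑ p ∈ setO j r n, (ellMod r 0 p : ℤ)
      = ∑ q ∈ setD j r n, ∑ i ∈ q.parts.toFinset, ((q.parts.count i / r : ℕ) : ℤ) := by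
  refine Finset.sum_nbij' (fun p => PhiP hr p) (fun q => PsiP hr q) ?_ ?_ ?_ ?_ ?_
  · intro p hp
    simp only [setO, Finset.mem_filter, Finset.mem_univ, true_and] at hp
    simp only [setD, Finset.mem_filter, Finset.mem_univ, true_and]
    have := statD hr p.parts (fun _ h => p.parts_pos h)
    show ((PhiM r p.parts).toFinset.filter fun i => r ≤ (PhiM r p.parts).count i).card = j
    rw [this]
    exact hp
  · intro q hq
    simp only [setD, Finset.mem_filter, Finset.mem_univ, true_and] at hq
    simp only [setO, Finset.mem_filter, Finset.mem_univ, true_and]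
    have hq0 : ∀ i ∈ q.parts, 0 < i := fun _ h => q.parts_pos h
    have h1 := statD hr (PsiM r q.parts) (pos_PsiM hr q.parts hq0)
    rw [PhiPsi hr q.parts hq0] at h1
    show ((PsiM r q.parts).toFinset.filter fun i => r ∣ i).card = j
    rw [← h1]
    exact hq
  · intro p _
    exact Nat.Partition.ext (PsiPhi hr p.parts (fun _ h => p.parts_pos h))
  · intro q _
    exact Nat.Partition.ext (PhiPsi hr q.parts (fun _ h => q.parts_pos h))
  · intro p _
    have := statSum hr p.parts (fun _ h => p.parts_pos h)
    show (ellMod r 0 p : ℤ) = ∑ i ∈ (PhiM r p.parts).toFinset, (((PhiM r p.parts).count i / r : ℕ) : ℤ)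
    rw [← Nat.cast_sum]
    exact congrArg (fun x : ℕ => (x : ℤ)) this.symm

lemma sum_card_filter_mod {r : ℕ} (hr : 2 ≤ r) (s : Multiset ℕ) :
    ∑ t ∈ range r, Multiset.card (s.filter fun i => i % r = t) = Multiset.card s := by
  induction s using Multiset.induction_on with
  | empty => simp
  | cons a s ih =>
    simp only [Multiset.filter_cons, Multiset.card_add, Multiset.card_cons]
    have h1 : ∀ t ∈ range r,
        Multiset.card (if a % r = t then ({a} : Multiset ℕ) else 0)
          + Multiset.card (Multiset.filter (fun i => i % r = t) s)
        = (if a % r = t then 1 else 0) + Multiset.card (Multiset.filter (fun i => i % r = t) s) := by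
      intro t _
      congr 1
      split <;> simp
    rw [Finset.sum_congr rfl h1, Finset.sum_add_distrib, ih,
      Finset.sum_ite_eq (range r) (a % r) (fun _ => 1),
      if_pos (Finset.mem_range.mpr (Nat.mod_lt a (by omega)))]
    omega

lemma Icc_erase {r : ℕ} (hr : 2 ≤ r) : Finset.Icc 1 (r - 1) = (range r).erase 0 := by
  ext t
  simp only [Finset.mem_Icc, Finset.mem_erase, Finset.mem_range]
  omega

lemma lemA {r : ℕ} (hr : 2 ≤ r) {n : ℕ} (p : Nat.Partition n) :
    ∑ t ∈ Finset.Icc 1 (r - 1), ((ellMod r t p : ℤ) - (ellMod r 0 p : ℤ))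
      = (numParts p : ℤ) - r * (ellMod r 0 p : ℤ) := by
  have h0 : ∑ t ∈ range r, ellMod r t p = numParts p := sum_card_filter_mod hr p.parts
  have h2 : ellMod r 0 p + ∑ t ∈ (range r).erase 0, ellMod r t p = numParts p := by
    rw [← h0]
    exact Finset.add_sum_erase (range r) (fun t => ellMod r t p)
      (Finset.mem_range.mpr (by omega))
  have h3 : ∑ t ∈ (range r).erase 0, (ellMod r t p : ℤ)
      = (numParts p : ℤ) - (ellMod r 0 p : ℤ) := by
    rw [← Nat.cast_sum]
    have : (∑ t ∈ (range r).erase 0, ellMod r t p : ℕ) = numParts p - ellMod r 0 p := by omega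
    rw [this]
    have hle : ellMod r 0 p ≤ numParts p := by omega
    push_cast [hle]
    ring
  rw [Finset.sum_sub_distrib, Icc_erase hr, h3, Finset.sum_const, Finset.card_erase_of_mem
    (Finset.mem_range.mpr (by omega)), Finset.card_range, nsmul_eq_mul]
  have hcast : ((r - 1 : ℕ) : ℤ) = (r : ℤ) - 1 := by
    have : 1 ≤ r := by omega
    push_cast [this]
    ring
  rw [hcast]
  ring

lemma lemB {r : ℕ} (hr : 2 ≤ r) {n : ℕ} (q : Nat.Partition n) :
    ∑ t ∈ Finset.Icc 1 (r - 1), (ellBarMod r t q : ℤ)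
      = (numParts q : ℤ) - r * ∑ i ∈ q.parts.toFinset, ((q.parts.count i / r : ℕ) : ℤ) := by
  have h1 : ∀ t, ellBarMod r t q
      = ∑ i ∈ q.parts.toFinset, if t ≤ q.parts.count i % r then 1 else 0 := by
    intro t
    exact Finset.card_filter _ _
  have h2 : ∑ t ∈ Finset.Icc 1 (r - 1), ellBarMod r t q
      = ∑ i ∈ q.parts.toFinset, q.parts.count i % r := by
    rw [Finset.sum_congr rfl (fun t _ => h1 t), Finset.sum_comm]
    refine Finset.sum_congr rfl fun i _ => ?_
    have hv : q.parts.count i % r < r := Nat.mod_lt _ (by omega)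
    rw [← Finset.card_filter]
    have hset : Finset.filter (fun t => t ≤ q.parts.count i % r) (Finset.Icc 1 (r - 1))
        = Finset.Icc 1 (q.parts.count i % r) := by
      ext t
      simp only [Finset.mem_filter, Finset.mem_Icc]
      omega
    rw [hset, Nat.card_Icc]
    omega
  have h4 : ∑ t ∈ Finset.Icc 1 (r - 1), (ellBarMod r t q : ℤ)
      = ∑ i ∈ q.parts.toFinset, ((q.parts.count i % r : ℕ) : ℤ) := by
    rw [← Nat.cast_sum, h2, Nat.cast_sum]
  have h3 : ∀ i ∈ q.parts.toFinset, ((q.parts.count i % r : ℕ) : ℤ)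
      = (q.parts.count i : ℤ) - r * ((q.parts.count i / r : ℕ) : ℤ) := by
    intro i _
    have hdm : r * (q.parts.count i / r) + q.parts.count i % r = q.parts.count i :=
      Nat.div_add_mod _ _
    have h6 : (r : ℤ) * ((q.parts.count i / r : ℕ) : ℤ) + ((q.parts.count i % r : ℕ) : ℤ)
        = ((q.parts.count i : ℕ) : ℤ) := by
      rw [← Nat.cast_mul, ← Nat.cast_add, hdm]
    linarith
  have h5 : ∑ i ∈ q.parts.toFinset, (q.parts.count i : ℤ) = (numParts q : ℤ) := by
    rw [← Nat.cast_sum]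
    exact congrArg (fun x : ℕ => (x : ℤ)) (Multiset.toFinset_sum_count_eq q.parts)
  rw [h4, Finset.sum_congr rfl h3, Finset.sum_sub_distrib, ← Finset.mul_sum, h5]


end GlaisherAux

/-- The sum over `t = 1, …, r-1` of `E_{j,r,t}(n)` equals `b_{j,r}(n)`. -/
theorem sum_EDiff_eq_bDiff (n j r : ℕ) (hr : 2 ≤ r) :
    ∑ t ∈ Finset.Icc 1 (r - 1), EDiff j r t n = bDiff j r n := by
  have key := GlaisherAux.key_sum hr j n
  calc ∑ t ∈ Finset.Icc 1 (r - 1), EDiff j r t n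
      = (∑ p ∈ setO j r n, ∑ t ∈ Finset.Icc 1 (r - 1),
            ((ellMod r t p : ℤ) - (ellMod r 0 p : ℤ)))
        - ∑ q ∈ setD j r n, ∑ t ∈ Finset.Icc 1 (r - 1), (ellBarMod r t q : ℤ) := by
        rw [show (∑ t ∈ Finset.Icc 1 (r - 1), EDiff j r t n)
            = ∑ t ∈ Finset.Icc 1 (r - 1),
              ((∑ p ∈ setO j r n, ((ellMod r t p : ℤ) - (ellMod r 0 p : ℤ)))
                - ∑ q ∈ setD j r n, (ellBarMod r t q : ℤ)) from rfl,
          Finset.sum_sub_distrib]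
        congr 1
        · exact Finset.sum_comm
        · exact Finset.sum_comm
    _ = (∑ p ∈ setO j r n, ((numParts p : ℤ) - r * (ellMod r 0 p : ℤ)))
        - ∑ q ∈ setD j r n, ((numParts q : ℤ)
            - r * ∑ i ∈ q.parts.toFinset, ((q.parts.count i / r : ℕ) : ℤ)) := by
        rw [Finset.sum_congr rfl (fun p _ => GlaisherAux.lemA hr p),
          Finset.sum_congr rfl (fun q _ => GlaisherAux.lemB hr q)]
    _ = bDiff j r n := by
        rw [bDiff, Finset.sum_sub_distrib, Finset.sum_sub_distrib,
          ← Finset.mul_sum, ← Finset.mul_sum, key]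
        ring
end

section
/- For all non-negative integers n, j and all integers r ≥ 2, r times the total number of parts divisible by r in all partitions in O_{j,r}(n) equals the sum of the nonresidual multiplicities of all parts in all partitions in D_{j,r}(n). -/
open Finset

namespace Nonres

variable {r : ℕ}

/-! ### Digit lemmas -/

lemma digit_sum (c K : ℕ) :
    ∑ k ∈ range K, c / r ^ k % r * r ^ k = c % r ^ K := by
  induction K with
  | zero => simp [Nat.mod_one]
  | succ K ih =>
    rw [Finset.sum_range_succ, ih, Nat.mod_pow_succ]
    ring

lemma self_lt_pow (hr : 2 ≤ r) (c : ℕ) : c < r ^ (c + 1) :=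
  lt_of_lt_of_le (lt_of_lt_of_le (Nat.lt_pow_self (n := c) one_lt_two)
    (Nat.pow_le_pow_left hr c)) (Nat.pow_le_pow_right (by omega) (Nat.le_succ c))

lemma digit_sum_eq (hr : 2 ≤ r) {c K : ℕ} (h : c < r ^ K) :
    ∑ k ∈ range K, c / r ^ k % r * r ^ k = c := by
  rw [digit_sum, Nat.mod_eq_of_lt h]

lemma k_lt_pow (hr : 2 ≤ r) (k : ℕ) : k < r ^ k :=
  lt_of_lt_of_le (Nat.lt_pow_self (n := k) one_lt_two) (Nat.pow_le_pow_left hr k)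

lemma sum_digits_lt (hr : 2 ≤ r) {d : ℕ → ℕ} {K : ℕ} (hd : ∀ j < K, d j < r) :
    ∑ j ∈ range K, d j * r ^ j < r ^ K := by
  induction K with
  | zero => simp
  | succ K ih =>
    rw [Finset.sum_range_succ, pow_succ]
    have h1 : ∑ j ∈ range K, d j * r ^ j < r ^ K :=
      ih fun j hj => hd j (hj.trans (Nat.lt_succ_self K))
    have h2 : d K < r := hd K (Nat.lt_succ_self K)
    have h3 : 0 < r ^ K := pow_pos (by omega) K
    nlinarith

lemma digit_extract (hr : 2 ≤ r) {d : ℕ → ℕ} {K : ℕ} (hd : ∀ j < K, d j < r)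
    {k : ℕ} (hk : k < K) :
    (∑ j ∈ range K, d j * r ^ j) / r ^ k % r = d k := by
  have hrk : 0 < r ^ k := pow_pos (by omega) k
  have hsplit : (∑ j ∈ range k, d j * r ^ j) + ∑ j ∈ Finset.Ico k K, d j * r ^ j
      = ∑ j ∈ range K, d j * r ^ j := by
    rw [Finset.range_eq_Ico, Finset.range_eq_Ico]
    exact Finset.sum_Ico_consecutive (fun j => d j * r ^ j) (Nat.zero_le k) (le_of_lt hk)
  have hL : ∑ j ∈ range k, d j * r ^ j < r ^ k :=
    sum_digits_lt hr fun j hj => hd j (hj.trans hk)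
  obtain ⟨t, ht⟩ : ∃ t, K - k = t + 1 := ⟨K - k - 1, by omega⟩
  have hmid : ∑ j ∈ Finset.Ico k K, d j * r ^ j
      = r ^ k * (d k + r * ∑ i ∈ range t, d (k + (i + 1)) * r ^ i) := by
    rw [Finset.sum_Ico_eq_sum_range, ht, Finset.sum_range_succ']
    have h1 : ∑ i ∈ range t, d (k + (i + 1)) * r ^ (k + (i + 1))
        = r ^ k * (r * ∑ i ∈ range t, d (k + (i + 1)) * r ^ i) := by
      rw [Finset.mul_sum, Finset.mul_sum]
      refine Finset.sum_congr rfl fun i _ => ?_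
      rw [pow_add, pow_succ]
      ring
    rw [h1]
    simp only [Nat.add_zero]
    ring
  rw [← hsplit, hmid, Nat.add_mul_div_left _ _ hrk, Nat.div_eq_of_lt hL, Nat.zero_add,
    Nat.add_comm (d k), Nat.mul_add_mod, Nat.mod_eq_of_lt (hd k hk)]

/-! ### valuation and base -/

def kv (r i : ℕ) : ℕ := Nat.findGreatest (fun k => r ^ k ∣ i) i

def bs (r i : ℕ) : ℕ := i / r ^ kv r i

lemma kv_dvd (r i : ℕ) : r ^ kv r i ∣ i := by
  rcases Nat.eq_zero_or_pos i with h | h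
  · simp [h]
  · exact Nat.findGreatest_spec (P := fun k => r ^ k ∣ i) (Nat.zero_le i) (by simp)

lemma kv_max (hr : 2 ≤ r) {i : ℕ} (hi : 0 < i) {k : ℕ} (hk : r ^ k ∣ i) : k ≤ kv r i :=
  Nat.le_findGreatest (le_trans (le_of_lt (k_lt_pow hr k)) (Nat.le_of_dvd hi hk)) hk

lemma bs_mul (r i : ℕ) : r ^ kv r i * bs r i = i := Nat.mul_div_cancel' (kv_dvd r i)

lemma bs_pos {i : ℕ} (hi : 0 < i) : 0 < bs r i := by
  rcases Nat.eq_zero_or_pos (bs r i) with h | h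
  · have := bs_mul r i; rw [h, Nat.mul_zero] at this; omega
  · exact h

lemma bs_not_dvd (hr : 2 ≤ r) {i : ℕ} (hi : 0 < i) : ¬ r ∣ bs r i := by
  intro h
  obtain ⟨c, hc⟩ := h
  have hb := bs_mul r i
  have h2 : r ^ (kv r i + 1) ∣ i := by
    refine ⟨c, ?_⟩
    conv_lhs => rw [← hb, hc]
    ring
  have := kv_max hr hi h2
  omega

lemma kv_bs_eq (hr : 2 ≤ r) {b : ℕ} (hb0 : 0 < b) (hb : ¬ r ∣ b) (k : ℕ) :
    kv r (b * r ^ k) = k ∧ bs r (b * r ^ k) = b := by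
  have hrpos : 0 < r := by omega
  have hpk : 0 < r ^ k := pow_pos hrpos k
  have hpos : 0 < b * r ^ k := Nat.mul_pos hb0 hpk
  have h1 : k ≤ kv r (b * r ^ k) := kv_max hr hpos (dvd_mul_left _ _)
  have h2 : kv r (b * r ^ k) ≤ k := by
    by_contra hcon
    push_neg at hcon
    have hd : r ^ (k + 1) ∣ b * r ^ k :=
      dvd_trans (pow_dvd_pow r hcon) (kv_dvd r (b * r ^ k))
    have hd2 : r ^ k * r ∣ r ^ k * b := by
      rw [← pow_succ]; rwa [mul_comm b] at hd
    exact hb ((mul_dvd_mul_iff_left hpk.ne').mp hd2)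
  have hk : kv r (b * r ^ k) = k := le_antisymm h2 h1
  exact ⟨hk, by rw [bs, hk, Nat.mul_div_cancel b hpk]⟩

lemma decomp (hr : 2 ≤ r) {i : ℕ} (hi : 0 < i) :
    bs r i * r ^ kv r i = i ∧ 0 < bs r i ∧ ¬ r ∣ bs r i :=
  ⟨by rw [mul_comm]; exact bs_mul r i, bs_pos hi, bs_not_dvd hr hi⟩

lemma pow_mul_inj (hr : 2 ≤ r) {b1 b2 k1 k2 : ℕ} (h1 : 0 < b1) (h2 : 0 < b2)
    (hd1 : ¬ r ∣ b1) (hd2 : ¬ r ∣ b2) (he : b1 * r ^ k1 = b2 * r ^ k2) :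
    b1 = b2 ∧ k1 = k2 := by
  have e1 := kv_bs_eq hr h1 hd1 k1
  have e2 := kv_bs_eq hr h2 hd2 k2
  rw [he] at e1
  exact ⟨by rw [← e1.2, e2.2], by rw [← e1.1, e2.1]⟩

/-! ### Multiset constructions -/

lemma msum_sum {β : Type*} (s : Finset β) (f : β → Multiset ℕ) :
    (∑ i ∈ s, f i).sum = ∑ i ∈ s, (f i).sum := by
  classical
  induction s using Finset.induction_on with
  | empty => simp
  | insert _ _ h ih => rw [Finset.sum_insert h, Finset.sum_insert h, Multiset.sum_add, ih]

lemma sum_nsmul' (n : ℕ) (s : Multiset ℕ) : (n • s).sum = n * s.sum := by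
  induction n with
  | zero => simp
  | succ n ih => rw [succ_nsmul, Multiset.sum_add, ih, Nat.succ_mul]

lemma msum (s : Multiset ℕ) : s.sum = ∑ a ∈ s.toFinset, s.count a * a := by
  conv_lhs => rw [← Multiset.toFinset_sum_count_nsmul_eq s]
  rw [msum_sum]
  refine Finset.sum_congr rfl fun a _ => ?_
  rw [Multiset.nsmul_singleton, Multiset.sum_replicate, smul_eq_mul]

def towerB (r b c : ℕ) : Multiset ℕ :=
  ∑ k ∈ range (c + 1), Multiset.replicate (c / r ^ k % r) (b * r ^ k)

def phiParts (r : ℕ) (s : Multiset ℕ) : Multiset ℕ :=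
  r • ((s.filter (r ∣ ·)).map (· / r)) +
    ∑ b ∈ s.toFinset.filter (fun b => ¬ r ∣ b), towerB r b (s.count b)

def psiParts (r : ℕ) (s : Multiset ℕ) : Multiset ℕ :=
  (∑ i ∈ s.toFinset, Multiset.replicate (s.count i / r) (r * i)) +
    ∑ i ∈ s.toFinset, Multiset.replicate (s.count i % r * r ^ kv r i) (bs r i)

lemma towerB_sum (hr : 2 ≤ r) (b c : ℕ) : (towerB r b c).sum = b * c := by
  rw [towerB, msum_sum]
  have h : ∀ k, (Multiset.replicate (c / r ^ k % r) (b * r ^ k)).sum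
      = b * (c / r ^ k % r * r ^ k) := by
    intro k; rw [Multiset.sum_replicate, smul_eq_mul]; ring
  rw [Finset.sum_congr rfl fun k _ => h k, ← Finset.mul_sum,
    digit_sum_eq hr (self_lt_pow hr c)]

lemma towerB_count (hr : 2 ≤ r) {b b' : ℕ} (hb0 : 0 < b) (hb : ¬ r ∣ b)
    (hb0' : 0 < b') (hb' : ¬ r ∣ b') (c k : ℕ) :
    Multiset.count (b * r ^ k) (towerB r b' c) = if b' = b then c / r ^ k % r else 0 := by
  rw [towerB, Multiset.count_sum']
  simp only [Multiset.count_replicate]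
  by_cases hbb : b' = b
  · subst hbb
    have hcond : ∀ k', (b' * r ^ k' = b' * r ^ k) ↔ k' = k := fun k' =>
      ⟨fun h => Nat.pow_right_injective hr (Nat.eq_of_mul_eq_mul_left hb0 h),
       fun h => by rw [h]⟩
    rw [Finset.sum_congr rfl fun k' _ => if_congr (hcond k') rfl rfl,
      Finset.sum_ite_eq' (range (c + 1)) k _]
    rw [if_pos rfl]
    by_cases hk : k ∈ range (c + 1)
    · rw [if_pos hk]
    · rw [if_neg hk]
      have hck : c < r ^ k := by
        refine lt_of_lt_of_le (self_lt_pow hr c) (Nat.pow_le_pow_right (by omega) ?_)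
        simpa using hk
      rw [Nat.div_eq_of_lt hck, Nat.zero_mod]
  · rw [if_neg hbb]
    refine Finset.sum_eq_zero fun k' _ => ?_
    rw [if_neg]
    intro h
    exact hbb (pow_mul_inj hr hb0' hb0 hb' hb h).1

lemma phiParts_count (hr : 2 ≤ r) {s : Multiset ℕ} (hs : ∀ x ∈ s, 0 < x)
    {b : ℕ} (hb0 : 0 < b) (hb : ¬ r ∣ b) (k : ℕ) :
    Multiset.count (b * r ^ k) (phiParts r s) =
      r * s.count (b * r ^ (k + 1)) + s.count b / r ^ k % r := by
  have hrpos : 0 < r := by omega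
  rw [phiParts, Multiset.count_add]
  have h1 : Multiset.count (b * r ^ k) (r • ((s.filter (r ∣ ·)).map (· / r)))
      = r * s.count (b * r ^ (k + 1)) := by
    rw [Multiset.count_nsmul, Multiset.count_map]
    congr 1
    rw [Multiset.filter_filter]
    have : Multiset.filter (fun m => b * r ^ k = m / r ∧ r ∣ m) s
        = Multiset.filter (fun m => b * r ^ (k + 1) = m) s := by
      refine Multiset.filter_congr fun m hm => ?_
      constructor
      · rintro ⟨h1, h2⟩
        rw [← Nat.mul_div_cancel' h2, ← h1, pow_succ]
        ring
      · rintro rfl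
        refine ⟨?_, (dvd_pow_self r (Nat.succ_ne_zero k)).mul_left b⟩
        rw [pow_succ, ← mul_assoc, Nat.mul_div_cancel _ hrpos]
    rw [this, ← Multiset.count_eq_card_filter_eq]
  have h2 : Multiset.count (b * r ^ k)
      (∑ b' ∈ s.toFinset.filter (fun b' => ¬ r ∣ b'), towerB r b' (s.count b'))
      = s.count b / r ^ k % r := by
    rw [Multiset.count_sum']
    have hcong : ∀ b' ∈ s.toFinset.filter (fun b' => ¬ r ∣ b'),
        Multiset.count (b * r ^ k) (towerB r b' (s.count b'))
        = if b' = b then s.count b / r ^ k % r else 0 := by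
      intro b' hb'
      rw [Finset.mem_filter] at hb'
      have hb'0 : 0 < b' := hs b' (Multiset.mem_toFinset.mp hb'.1)
      rw [towerB_count hr hb0 hb hb'0 hb'.2]
      by_cases h : b' = b
      · subst h; rfl
      · simp [h]
    rw [Finset.sum_congr rfl hcong, Finset.sum_ite_eq' _ b _]
    by_cases hmem : b ∈ s.toFinset.filter (fun b' => ¬ r ∣ b')
    · rw [if_pos hmem]
    · rw [if_neg hmem]
      have hc : s.count b = 0 := by
        rw [Multiset.count_eq_zero]
        intro hbs
        exact hmem (Finset.mem_filter.mpr ⟨Multiset.mem_toFinset.mpr hbs, hb⟩)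
      rw [hc, Nat.zero_div, Nat.zero_mod]
  rw [h1, h2]


lemma psiParts_count_pos (hr : 2 ≤ r) {s : Multiset ℕ} (hs : ∀ x ∈ s, 0 < x)
    {b : ℕ} (hb0 : 0 < b) (hb : ¬ r ∣ b) (k : ℕ) (hk : 0 < k) :
    Multiset.count (b * r ^ k) (psiParts r s) = s.count (b * r ^ (k - 1)) / r := by
  have hrpos : 0 < r := by omega
  rw [psiParts, Multiset.count_add, Multiset.count_sum', Multiset.count_sum']
  have h2 : ∑ i ∈ s.toFinset,
      Multiset.count (b * r ^ k)
        (Multiset.replicate (s.count i % r * r ^ kv r i) (bs r i)) = 0 := by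
    refine Finset.sum_eq_zero fun i hi => ?_
    rw [Multiset.count_replicate, if_neg]
    intro h
    have hipos : 0 < i := hs i (Multiset.mem_toFinset.mp hi)
    have : r ∣ bs r i := by
      rw [h]
      exact (dvd_pow_self r hk.ne').mul_left b
    exact bs_not_dvd hr hipos this
  have h1 : ∑ i ∈ s.toFinset,
      Multiset.count (b * r ^ k) (Multiset.replicate (s.count i / r) (r * i))
      = s.count (b * r ^ (k - 1)) / r := by
    obtain ⟨t, rfl⟩ : ∃ t, k = t + 1 := ⟨k - 1, by omega⟩
    simp only [Nat.add_sub_cancel]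
    have hcong : ∀ i ∈ s.toFinset,
        Multiset.count (b * r ^ (t + 1)) (Multiset.replicate (s.count i / r) (r * i))
        = if i = b * r ^ t then s.count (b * r ^ t) / r else 0 := by
      intro i hi
      rw [Multiset.count_replicate]
      by_cases h : i = b * r ^ t
      · subst h
        rw [if_pos rfl, if_pos]
        rw [pow_succ]; ring
      · rw [if_neg h, if_neg]
        intro hcon
        refine h (Nat.eq_of_mul_eq_mul_left hrpos ?_)
        rw [hcon, pow_succ]; ring
    rw [Finset.sum_congr rfl hcong, Finset.sum_ite_eq' _ (b * r ^ t) _]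
    by_cases hmem : b * r ^ t ∈ s.toFinset
    · rw [if_pos hmem]
    · rw [if_neg hmem]
      have hc : s.count (b * r ^ t) = 0 := by
        rw [Multiset.count_eq_zero]
        exact fun hcm => hmem (Multiset.mem_toFinset.mpr hcm)
      rw [hc, Nat.zero_div]
  rw [h1, h2, Nat.add_zero]

lemma psiParts_count_zero (hr : 2 ≤ r) {s : Multiset ℕ} (hs : ∀ x ∈ s, 0 < x)
    {b : ℕ} (hb0 : 0 < b) (hb : ¬ r ∣ b) :
    Multiset.count b (psiParts r s)
      = ∑ j ∈ range (s.sum + 1), s.count (b * r ^ j) % r * r ^ j := by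
  have hrpos : 0 < r := by omega
  rw [psiParts, Multiset.count_add, Multiset.count_sum', Multiset.count_sum']
  have h1 : ∑ i ∈ s.toFinset,
      Multiset.count b (Multiset.replicate (s.count i / r) (r * i)) = 0 := by
    refine Finset.sum_eq_zero fun i hi => ?_
    rw [Multiset.count_replicate, if_neg]
    intro h
    exact hb ⟨i, h.symm⟩
  have h2 : ∑ i ∈ s.toFinset,
      Multiset.count b (Multiset.replicate (s.count i % r * r ^ kv r i) (bs r i))
      = ∑ j ∈ range (s.sum + 1), s.count (b * r ^ j) % r * r ^ j := by
    simp only [Multiset.count_replicate]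
    rw [← Finset.sum_filter]
    have hb1 : ∑ i ∈ s.toFinset.filter (fun i => bs r i = b), s.count i % r * r ^ kv r i
        = ∑ j ∈ (range (s.sum + 1)).filter (fun j => b * r ^ j ∈ s.toFinset),
            s.count (b * r ^ j) % r * r ^ j := by
      refine Finset.sum_nbij' (fun i => kv r i) (fun j => b * r ^ j) ?_ ?_ ?_ ?_ ?_
      · intro i hi
        rw [Finset.mem_filter] at hi
        have his : i ∈ s := Multiset.mem_toFinset.mp hi.1
        have hipos : 0 < i := hs i his
        have heq : b * r ^ kv r i = i := by
          rw [← hi.2]; rw [mul_comm]; exact bs_mul r i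
        have ha : kv r i < r ^ kv r i := k_lt_pow hr _
        have hb2 : r ^ kv r i ≤ i := Nat.le_of_dvd hipos (kv_dvd r i)
        have hle : i ≤ s.sum := Multiset.single_le_sum (fun x _ => Nat.zero_le x) i his
        simp only [Finset.mem_filter, Finset.mem_range]
        exact ⟨by omega, by rw [heq]; exact hi.1⟩
      · intro j hj
        rw [Finset.mem_filter] at hj
        rw [Finset.mem_filter]
        exact ⟨hj.2, (kv_bs_eq hr hb0 hb j).2⟩
      · intro i hi
        rw [Finset.mem_filter] at hi
        show b * r ^ kv r i = i
        rw [← hi.2]; rw [mul_comm]; exact bs_mul r i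
      · intro j hj
        exact (kv_bs_eq hr hb0 hb j).1
      · intro i hi
        rw [Finset.mem_filter] at hi
        have heq : b * r ^ kv r i = i := by
          rw [← hi.2]; rw [mul_comm]; exact bs_mul r i
        show s.count i % r * r ^ kv r i = s.count (b * r ^ kv r i) % r * r ^ kv r i
        rw [heq]
    have hb3 : ∑ j ∈ (range (s.sum + 1)).filter (fun j => b * r ^ j ∈ s.toFinset),
            s.count (b * r ^ j) % r * r ^ j
        = ∑ j ∈ range (s.sum + 1), s.count (b * r ^ j) % r * r ^ j := by
      refine Finset.sum_subset (Finset.filter_subset _ _) ?_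
      intro j hj hnj
      have hc : s.count (b * r ^ j) = 0 := by
        rw [Multiset.count_eq_zero]
        intro hcm
        exact hnj (Finset.mem_filter.mpr ⟨hj, Multiset.mem_toFinset.mpr hcm⟩)
      rw [hc, Nat.zero_mod, Nat.zero_mul]
    rw [hb1, hb3]
  rw [h1, h2, Nat.zero_add]

lemma phiParts_sum (hr : 2 ≤ r) {s : Multiset ℕ} (hs : ∀ x ∈ s, 0 < x) :
    (phiParts r s).sum = s.sum := by
  have hrpos : 0 < r := by omega
  rw [phiParts, Multiset.sum_add]
  have hA : (r • ((s.filter (r ∣ ·)).map (· / r))).sum = (Multiset.filter (r ∣ ·) s).sum := by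
    rw [sum_nsmul', ← Multiset.sum_map_mul_left]
    have hmc : Multiset.map (fun m => r * (m / r)) (Multiset.filter (r ∣ ·) s)
        = Multiset.map id (Multiset.filter (r ∣ ·) s) :=
      Multiset.map_congr rfl fun m hm => Nat.mul_div_cancel' (Multiset.of_mem_filter hm)
    rw [hmc, Multiset.map_id]
  have hB : (∑ b ∈ s.toFinset.filter (fun b => ¬ r ∣ b), towerB r b (s.count b)).sum
      = (Multiset.filter (fun a => ¬ r ∣ a) s).sum := by
    rw [msum_sum, Finset.sum_congr rfl fun b _ => towerB_sum hr b (s.count b),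
      msum (Multiset.filter (fun a => ¬ r ∣ a) s), Multiset.toFinset_filter]
    refine (Finset.sum_congr rfl fun b hbmem => ?_).symm
    rw [Finset.mem_filter] at hbmem
    rw [Multiset.count_filter, if_pos hbmem.2, mul_comm]
  rw [hA, hB]
  exact Multiset.sum_filter_add_sum_filter_not (fun a => r ∣ a)

lemma psiParts_sum (hr : 2 ≤ r) {s : Multiset ℕ} (hs : ∀ x ∈ s, 0 < x) :
    (psiParts r s).sum = s.sum := by
  rw [psiParts, Multiset.sum_add, msum_sum, msum_sum, ← Finset.sum_add_distrib, msum s]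
  refine Finset.sum_congr rfl fun i hi => ?_
  rw [Multiset.sum_replicate, Multiset.sum_replicate, smul_eq_mul, smul_eq_mul]
  have hbsm : r ^ kv r i * bs r i = i := bs_mul r i
  calc s.count i / r * (r * i) + s.count i % r * r ^ kv r i * bs r i
      = (s.count i / r * r + s.count i % r) * i := by
        rw [mul_assoc (s.count i % r), hbsm]; ring
    _ = s.count i * i := by
        rw [mul_comm (s.count i / r) r, Nat.div_add_mod]

lemma phiParts_pos (hr : 2 ≤ r) {s : Multiset ℕ} (hs : ∀ x ∈ s, 0 < x) :
    ∀ x ∈ phiParts r s, 0 < x := by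
  intro x hx
  rw [phiParts, Multiset.mem_add] at hx
  rcases hx with hx | hx
  · rw [Multiset.mem_nsmul] at hx
    obtain ⟨-, hx⟩ := hx
    rw [Multiset.mem_map] at hx
    obtain ⟨m, hm, rfl⟩ := hx
    rw [Multiset.mem_filter] at hm
    have h0 := hs m hm.1
    have h1 : r ≤ m := Nat.le_of_dvd h0 hm.2
    exact Nat.div_pos h1 (by omega)
  · rw [Multiset.mem_sum] at hx
    obtain ⟨b, hbmem, hxb⟩ := hx
    rw [Finset.mem_filter] at hbmem
    have hbpos : 0 < b := hs b (Multiset.mem_toFinset.mp hbmem.1)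
    rw [towerB, Multiset.mem_sum] at hxb
    obtain ⟨k, _, hk⟩ := hxb
    rw [Multiset.eq_of_mem_replicate hk]
    exact Nat.mul_pos hbpos (pow_pos (by omega) k)

lemma psiParts_pos (hr : 2 ≤ r) {s : Multiset ℕ} (hs : ∀ x ∈ s, 0 < x) :
    ∀ x ∈ psiParts r s, 0 < x := by
  intro x hx
  rw [psiParts, Multiset.mem_add] at hx
  rcases hx with hx | hx <;> rw [Multiset.mem_sum] at hx <;> obtain ⟨i, hi, hxi⟩ := hx
  · rw [Multiset.eq_of_mem_replicate hxi]
    exact Nat.mul_pos (by omega) (hs i (Multiset.mem_toFinset.mp hi))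
  · rw [Multiset.eq_of_mem_replicate hxi]
    exact bs_pos (hs i (Multiset.mem_toFinset.mp hi))


lemma card_le_sum : ∀ {s : Multiset ℕ}, (∀ x ∈ s, 0 < x) → Multiset.card s ≤ s.sum := by
  intro s
  refine Multiset.induction_on s (by simp) ?_
  intro a t ih hs
  rw [Multiset.card_cons, Multiset.sum_cons]
  have h1 : 0 < a := hs a (Multiset.mem_cons_self a t)
  have h2 := ih fun x hx => hs x (Multiset.mem_cons_of_mem hx)
  omega

lemma psi_phi (hr : 2 ≤ r) {s : Multiset ℕ} (hs : ∀ x ∈ s, 0 < x) :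
    psiParts r (phiParts r s) = s := by
  have hrpos : 0 < r := by omega
  have hts : ∀ x ∈ phiParts r s, 0 < x := phiParts_pos hr hs
  ext a
  rcases Nat.eq_zero_or_pos a with rfl | ha
  · rw [Multiset.count_eq_zero.mpr, Multiset.count_eq_zero.mpr]
    · exact fun h => absurd (hs 0 h) (lt_irrefl 0)
    · exact fun h => absurd (psiParts_pos hr hts 0 h) (lt_irrefl 0)
  obtain ⟨b, k, hb0, hbnd, rfl⟩ : ∃ b k, 0 < b ∧ ¬ r ∣ b ∧ b * r ^ k = a :=
    ⟨bs r a, kv r a, bs_pos ha, bs_not_dvd hr ha, (decomp hr ha).1⟩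
  rcases Nat.eq_zero_or_pos k with rfl | hk
  · rw [pow_zero, mul_one, psiParts_count_zero hr hts hb0 hbnd, phiParts_sum hr hs]
    have hcong : ∀ j ∈ range (s.sum + 1),
        (phiParts r s).count (b * r ^ j) % r * r ^ j
          = s.count b / r ^ j % r * r ^ j := by
      intro j _
      rw [phiParts_count hr hs hb0 hbnd j, Nat.mul_add_mod,
        Nat.mod_mod_of_dvd _ dvd_rfl]
    rw [Finset.sum_congr rfl hcong]
    refine digit_sum_eq hr ?_
    have h1 : s.count b ≤ Multiset.card s := Multiset.count_le_card b s
    have h2 : Multiset.card s ≤ s.sum := card_le_sum hs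
    have h3 : s.sum < r ^ (s.sum + 1) := self_lt_pow hr s.sum
    omega
  · rw [psiParts_count_pos hr hts hb0 hbnd k hk,
      phiParts_count hr hs hb0 hbnd (k - 1)]
    have hk1 : k - 1 + 1 = k := by omega
    rw [hk1, Nat.mul_add_div hrpos, Nat.div_eq_of_lt (Nat.mod_lt _ hrpos), Nat.add_zero]

lemma phi_psi (hr : 2 ≤ r) {u : Multiset ℕ} (hu : ∀ x ∈ u, 0 < x) :
    phiParts r (psiParts r u) = u := by
  have hrpos : 0 < r := by omega
  have htu : ∀ x ∈ psiParts r u, 0 < x := psiParts_pos hr hu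
  ext a
  rcases Nat.eq_zero_or_pos a with rfl | ha
  · rw [Multiset.count_eq_zero.mpr, Multiset.count_eq_zero.mpr]
    · exact fun h => absurd (hu 0 h) (lt_irrefl 0)
    · exact fun h => absurd (phiParts_pos hr htu 0 h) (lt_irrefl 0)
  obtain ⟨b, k, hb0, hbnd, rfl⟩ : ∃ b k, 0 < b ∧ ¬ r ∣ b ∧ b * r ^ k = a :=
    ⟨bs r a, kv r a, bs_pos ha, bs_not_dvd hr ha, (decomp hr ha).1⟩
  rw [phiParts_count hr htu hb0 hbnd k,
    psiParts_count_pos hr hu hb0 hbnd (k + 1) (Nat.succ_pos k), Nat.add_sub_cancel,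
    psiParts_count_zero hr hu hb0 hbnd]
  have hd : ∀ j < u.sum + 1, u.count (b * r ^ j) % r < r := fun j _ => Nat.mod_lt _ hrpos
  by_cases hkK : k < u.sum + 1
  · rw [digit_extract hr hd hkK]
    exact Nat.div_add_mod _ _
  · push_neg at hkK
    have hcnt : u.count (b * r ^ k) = 0 := by
      rw [Multiset.count_eq_zero]
      intro hmem
      have h1 : b * r ^ k ≤ u.sum := Multiset.single_le_sum (fun x _ => Nat.zero_le x) _ hmem
      have h2 : r ^ (u.sum + 1) ≤ r ^ k := Nat.pow_le_pow_right (by omega) hkK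
      have h3 : u.sum < r ^ (u.sum + 1) := self_lt_pow hr u.sum
      have h4 : r ^ k ≤ b * r ^ k := Nat.le_mul_of_pos_left _ hb0
      omega
    have hS : (∑ j ∈ range (u.sum + 1), u.count (b * r ^ j) % r * r ^ j) < r ^ k :=
      lt_of_lt_of_le (sum_digits_lt hr hd) (Nat.pow_le_pow_right (by omega) hkK)
    rw [hcnt, Nat.div_eq_of_lt hS]
    simp


lemma phiParts_count' (hr : 2 ≤ r) {s : Multiset ℕ} (hs : ∀ x ∈ s, 0 < x)
    {i : ℕ} (hi : 0 < i) :
    ∃ d, d < r ∧ (phiParts r s).count i = r * s.count (r * i) + d := by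
  obtain ⟨b, k, hb0, hbnd, rfl⟩ : ∃ b k, 0 < b ∧ ¬ r ∣ b ∧ b * r ^ k = i :=
    ⟨bs r i, kv r i, bs_pos hi, bs_not_dvd hr hi, (decomp hr hi).1⟩
  refine ⟨s.count b / r ^ k % r, Nat.mod_lt _ (by omega), ?_⟩
  rw [phiParts_count hr hs hb0 hbnd k]
  have he : r * (b * r ^ k) = b * r ^ (k + 1) := by rw [pow_succ]; ring
  rw [he]

lemma phiParts_count_div (hr : 2 ≤ r) {s : Multiset ℕ} (hs : ∀ x ∈ s, 0 < x)
    {i : ℕ} (hi : 0 < i) :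
    (phiParts r s).count i / r = s.count (r * i) := by
  obtain ⟨d, hd, he⟩ := phiParts_count' hr hs hi
  rw [he, Nat.mul_add_div (by omega), Nat.div_eq_of_lt hd, Nat.add_zero]

lemma phiParts_count_ge (hr : 2 ≤ r) {s : Multiset ℕ} (hs : ∀ x ∈ s, 0 < x)
    {i : ℕ} (hi : 0 < i) :
    r ≤ (phiParts r s).count i ↔ 0 < s.count (r * i) := by
  obtain ⟨d, hd, he⟩ := phiParts_count' hr hs hi
  rw [he]
  constructor
  · intro h
    rcases Nat.eq_zero_or_pos (s.count (r * i)) with h0 | h0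
    · rw [h0, Nat.mul_zero, Nat.zero_add] at h; omega
    · exact h0
  · intro h
    calc r = r * 1 := (Nat.mul_one r).symm
      _ ≤ r * s.count (r * i) := Nat.mul_le_mul_left r h
      _ ≤ r * s.count (r * i) + d := Nat.le_add_right _ _

lemma phi_stat_card (hr : 2 ≤ r) {s : Multiset ℕ} (hs : ∀ x ∈ s, 0 < x) :
    ((phiParts r s).toFinset.filter fun i => r ≤ (phiParts r s).count i).card
      = (s.toFinset.filter fun i => r ∣ i).card := by
  have hrpos : 0 < r := by omega
  refine Finset.card_nbij' (fun i => r * i) (fun m => m / r) ?_ ?_ ?_ ?_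
  · intro i hi
    rw [Finset.mem_coe, Finset.mem_filter] at hi
    have hipos : 0 < i := phiParts_pos hr hs i (Multiset.mem_toFinset.mp hi.1)
    have hge := (phiParts_count_ge hr hs hipos).mp hi.2
    rw [Finset.mem_coe, Finset.mem_filter]
    exact ⟨Multiset.mem_toFinset.mpr (Multiset.count_pos.mp hge), Dvd.intro i rfl⟩
  · intro m hm
    rw [Finset.mem_coe, Finset.mem_filter] at hm
    have hmem : m ∈ s := Multiset.mem_toFinset.mp hm.1
    have hmpos : 0 < m := hs m hmem
    have hdvd := hm.2
    have hdiv : r * (m / r) = m := Nat.mul_div_cancel' hdvd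
    have hdpos : 0 < m / r := Nat.div_pos (Nat.le_of_dvd hmpos hdvd) hrpos
    have hge : r ≤ (phiParts r s).count (m / r) := by
      rw [phiParts_count_ge hr hs hdpos, hdiv]
      exact Multiset.count_pos.mpr hmem
    rw [Finset.mem_coe, Finset.mem_filter]
    exact ⟨Multiset.mem_toFinset.mpr (Multiset.count_pos.mp (lt_of_lt_of_le hrpos hge)), hge⟩
  · intro i hi
    exact Nat.mul_div_cancel_left i hrpos
  · intro m hm
    rw [Finset.mem_coe, Finset.mem_filter] at hm
    exact Nat.mul_div_cancel' hm.2

lemma phi_stat_sum (hr : 2 ≤ r) {s : Multiset ℕ} (hs : ∀ x ∈ s, 0 < x) :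
    ∑ i ∈ (phiParts r s).toFinset, r * ((phiParts r s).count i / r)
      = r * Multiset.card (s.filter fun i => i % r = 0) := by
  have hrpos : 0 < r := by omega
  have hstep1 : ∑ i ∈ (phiParts r s).toFinset, r * ((phiParts r s).count i / r)
      = ∑ i ∈ (phiParts r s).toFinset, r * s.count (r * i) := by
    refine Finset.sum_congr rfl fun i hi => ?_
    rw [phiParts_count_div hr hs (phiParts_pos hr hs i (Multiset.mem_toFinset.mp hi))]
  have hstep2 : Multiset.card (s.filter fun i => i % r = 0)
      = ∑ m ∈ s.toFinset.filter (fun m => r ∣ m), s.count m := by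
    have hpred : (s.filter fun i => i % r = 0) = s.filter fun i => r ∣ i := by
      refine Multiset.filter_congr fun x _ => ?_
      exact ⟨fun h => Nat.dvd_iff_mod_eq_zero.mpr h, fun h => Nat.dvd_iff_mod_eq_zero.mp h⟩
    rw [hpred, ← Multiset.toFinset_sum_count_eq (s.filter fun i => r ∣ i),
      Multiset.toFinset_filter]
    refine Finset.sum_congr rfl fun m hm => ?_
    rw [Finset.mem_filter] at hm
    rw [Multiset.count_filter, if_pos hm.2]
  have hstep3 : ∑ i ∈ (phiParts r s).toFinset, s.count (r * i)
      = ∑ m ∈ s.toFinset.filter (fun m => r ∣ m), s.count m := by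
    rw [← Finset.sum_filter_ne_zero ((phiParts r s).toFinset) (f := fun i => s.count (r * i))]
    refine Finset.sum_nbij' (fun i => r * i) (fun m => m / r) ?_ ?_ ?_ ?_ ?_
    · intro i hi
      rw [Finset.mem_filter] at hi
      rw [Finset.mem_filter]
      exact ⟨Multiset.mem_toFinset.mpr (Multiset.count_pos.mp (Nat.pos_of_ne_zero hi.2)),
        Dvd.intro i rfl⟩
    · intro m hm
      rw [Finset.mem_filter] at hm
      have hmem : m ∈ s := Multiset.mem_toFinset.mp hm.1
      have hmpos : 0 < m := hs m hmem
      have hdiv : r * (m / r) = m := Nat.mul_div_cancel' hm.2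
      have hdpos : 0 < m / r := Nat.div_pos (Nat.le_of_dvd hmpos hm.2) hrpos
      rw [Finset.mem_filter]
      constructor
      · rw [Multiset.mem_toFinset]
        have hge := (phiParts_count_ge hr hs hdpos).mpr
          (by rw [hdiv]; exact Multiset.count_pos.mpr hmem)
        exact Multiset.count_pos.mp (lt_of_lt_of_le hrpos hge)
      · rw [hdiv]
        exact (Multiset.count_pos.mpr hmem).ne'
    · intro i hi
      exact Nat.mul_div_cancel_left i hrpos
    · intro m hm
      rw [Finset.mem_filter] at hm
      exact Nat.mul_div_cancel' hm.2
    · intro i hi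
      rfl
  rw [hstep1, hstep2, ← Finset.mul_sum, ← hstep3, Finset.mul_sum]


def phiP {r : ℕ} (hr : 2 ≤ r) {n : ℕ} (p : Nat.Partition n) : Nat.Partition n where
  parts := phiParts r p.parts
  parts_pos := fun {i} hi => phiParts_pos hr (fun x hx => p.parts_pos hx) i hi
  parts_sum := by
    rw [phiParts_sum hr fun x hx => p.parts_pos hx]
    exact p.parts_sum

def psiP {r : ℕ} (hr : 2 ≤ r) {n : ℕ} (p : Nat.Partition n) : Nat.Partition n where
  parts := psiParts r p.parts
  parts_pos := fun {i} hi => psiParts_pos hr (fun x hx => p.parts_pos hx) i hi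
  parts_sum := by
    rw [psiParts_sum hr fun x hx => p.parts_pos hx]
    exact p.parts_sum

lemma psiP_phiP {r : ℕ} (hr : 2 ≤ r) {n : ℕ} (p : Nat.Partition n) :
    psiP hr (phiP hr p) = p :=
  Nat.Partition.ext (psi_phi hr fun x hx => p.parts_pos hx)

lemma phiP_psiP {r : ℕ} (hr : 2 ≤ r) {n : ℕ} (q : Nat.Partition n) :
    phiP hr (psiP hr q) = q :=
  Nat.Partition.ext (phi_psi hr fun x hx => q.parts_pos hx)

end Nonres

/-- `r` times the total number of parts divisible by `r` in all partitions in `O_{j,r}(n)`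
equals the sum of the nonresidual multiplicities of all parts in all partitions in
`D_{j,r}(n)`. -/
theorem nonresidual_multiplicities (n j r : ℕ) (hr : 2 ≤ r) :
    r * ∑ p ∈ setO j r n, ellMod r 0 p =
      ∑ p ∈ setD j r n, ∑ i ∈ p.parts.toFinset, r * (p.parts.count i / r) := by
  rw [Finset.mul_sum]
  refine Finset.sum_nbij' (Nonres.phiP hr) (Nonres.psiP hr) ?_ ?_ ?_ ?_ ?_
  · intro p hp
    rw [setO, Finset.mem_filter] at hp
    rw [setD, Finset.mem_filter]
    refine ⟨Finset.mem_univ _, ?_⟩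
    have h1 := Nonres.phi_stat_card hr (s := p.parts) fun x hx => p.parts_pos hx
    exact h1.trans hp.2
  · intro q hq
    rw [setD, Finset.mem_filter] at hq
    rw [setO, Finset.mem_filter]
    refine ⟨Finset.mem_univ _, ?_⟩
    have hpos : ∀ x ∈ q.parts, 0 < x := fun x hx => q.parts_pos hx
    have hpos2 : ∀ x ∈ Nonres.psiParts r q.parts, 0 < x := Nonres.psiParts_pos hr hpos
    have h1 := Nonres.phi_stat_card hr hpos2
    rw [Nonres.phi_psi hr hpos] at h1
    exact h1.symm.trans hq.2
  · intro p _
    exact Nonres.psiP_phiP hr p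
  · intro q _
    exact Nonres.phiP_psiP hr q
  · intro p _
    exact (Nonres.phi_stat_sum hr fun x hx => p.parts_pos hx).symm
end

section
/- For all non-negative integers n, j and all integers r ≥ 2, b'_{j,r}(n) = T_{j+1,r}(n) − T_{j,r}(n), where the equality holds in the integers. -/
open Finset

namespace BeckG

/-- largest divisor of `x` not divisible by `r` (the "base" of `x`). -/
def bs (r x : ℕ) : ℕ :=
  if h : 2 ≤ r ∧ r ∣ x ∧ x ≠ 0 then bs r (x / r) else x
  decreasing_by exact Nat.div_lt_self (Nat.pos_of_ne_zero h.2.2) h.1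

/-- the `r`-adic valuation of `x`. -/
def vv (r x : ℕ) : ℕ :=
  if h : 2 ≤ r ∧ r ∣ x ∧ x ≠ 0 then vv r (x / r) + 1 else 0
  decreasing_by exact Nat.div_lt_self (Nat.pos_of_ne_zero h.2.2) h.1

/-- the multiset with `m/r^i % r` copies of `b * r^i` (Glaisher block). -/
def dM (r b m : ℕ) : Multiset ℕ :=
  if h : 2 ≤ r ∧ m ≠ 0 then Multiset.replicate (m % r) b + dM r (r * b) (m / r) else 0
  decreasing_by exact Nat.div_lt_self (Nat.pos_of_ne_zero h.2) h.1

/-- Glaisher's map. -/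
def Gl (r : ℕ) (s : Multiset ℕ) : Multiset ℕ :=
  ∑ b ∈ s.toFinset, dM r b (s.count b)

/-- Inverse of Glaisher's map. -/
def Hl (r : ℕ) (s : Multiset ℕ) : Multiset ℕ :=
  s.bind fun x => Multiset.replicate (x / bs r x) (bs r x)

lemma card_nbij_old {α β : Type*} {s : Finset α} {t : Finset β} (i : α → β) (j : β → α)
    (hi : ∀ a ∈ s, i a ∈ t) (hj : ∀ a ∈ t, j a ∈ s) (left_inv : ∀ a ∈ s, j (i a) = a)
    (right_inv : ∀ a ∈ t, i (j a) = a) : s.card = t.card :=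
  Finset.card_nbij' i j hi hj left_inv right_inv

variable {r : ℕ} (hr : 2 ≤ r)

lemma bs_of_not_dvd {x : ℕ} (h : ¬ r ∣ x) : bs r x = x := by
  rw [bs]; simp [h]

lemma vv_of_not_dvd {x : ℕ} (h : ¬ r ∣ x) : vv r x = 0 := by
  rw [vv]; simp [h]

include hr

lemma bs_of_dvd {x : ℕ} (h : r ∣ x) (hx : x ≠ 0) : bs r x = bs r (x / r) := by
  rw [bs]; simp [h, hx, hr]

lemma vv_of_dvd {x : ℕ} (h : r ∣ x) (hx : x ≠ 0) : vv r x = vv r (x / r) + 1 := by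
  rw [vv]; simp [h, hx, hr]

lemma bs_mul_pow {b : ℕ} (hb : ¬ r ∣ b) (i : ℕ) : bs r (b * r ^ i) = b := by
  induction i with
  | zero => simpa using bs_of_not_dvd hb
  | succ i ih =>
    have hb0 : b ≠ 0 := by rintro rfl; exact hb (dvd_zero r)
    have hx : b * r ^ (i+1) ≠ 0 := by positivity
    have hdvd : r ∣ b * r ^ (i+1) := Dvd.dvd.mul_left (dvd_pow_self r (Nat.succ_ne_zero i)) b
    rw [bs_of_dvd hr hdvd hx]
    have : b * r ^ (i+1) / r = b * r ^ i := by
      rw [pow_succ, ← mul_assoc]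
      exact Nat.mul_div_cancel _ (show 0 < r by omega)
    rw [this, ih]

lemma vv_mul_pow {b : ℕ} (hb : ¬ r ∣ b) (i : ℕ) : vv r (b * r ^ i) = i := by
  induction i with
  | zero => simpa using vv_of_not_dvd hb
  | succ i ih =>
    have hb0 : b ≠ 0 := by rintro rfl; exact hb (dvd_zero r)
    have hx : b * r ^ (i+1) ≠ 0 := by positivity
    have hdvd : r ∣ b * r ^ (i+1) := Dvd.dvd.mul_left (dvd_pow_self r (Nat.succ_ne_zero i)) b
    rw [vv_of_dvd hr hdvd hx]
    have : b * r ^ (i+1) / r = b * r ^ i := by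
      rw [pow_succ, ← mul_assoc]
      exact Nat.mul_div_cancel _ (show 0 < r by omega)
    rw [this, ih]

lemma bs_mul_pow_vv : ∀ x, bs r x * r ^ vv r x = x := by
  intro x
  induction x using Nat.strong_induction_on with
  | _ x ih =>
    by_cases h : r ∣ x ∧ x ≠ 0
    · rw [bs_of_dvd hr h.1 h.2, vv_of_dvd hr h.1 h.2, pow_succ, ← mul_assoc,
        ih (x / r) (Nat.div_lt_self (Nat.pos_of_ne_zero h.2) hr)]
      exact Nat.div_mul_cancel h.1
    · rcases Decidable.not_and_iff_or_not.mp h with h' | h'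
      · rw [bs_of_not_dvd h', vv_of_not_dvd h', pow_zero, mul_one]
      · simp at h'; subst h'; simp [bs, vv]

lemma not_dvd_bs : ∀ x, x ≠ 0 → ¬ r ∣ bs r x := by
  intro x
  induction x using Nat.strong_induction_on with
  | _ x ih =>
    intro hx
    by_cases h : r ∣ x
    · rw [bs_of_dvd hr h hx]
      have hxr : x / r ≠ 0 := by
        have := Nat.le_of_dvd (Nat.pos_of_ne_zero hx) h
        have : 0 < x / r := Nat.div_pos this (by omega)
        omega
      exact ih (x / r) (Nat.div_lt_self (Nat.pos_of_ne_zero hx) hr) hxr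
    · rw [bs_of_not_dvd h]; exact h

lemma bs_ne_zero {x : ℕ} (hx : x ≠ 0) : bs r x ≠ 0 := by
  intro h
  have := bs_mul_pow_vv hr x
  rw [h, zero_mul] at this
  exact hx this.symm

lemma base_eq {b b' i i' : ℕ} (hb : ¬ r ∣ b) (hb' : ¬ r ∣ b')
    (h : b * r ^ i = b' * r ^ i') : b = b' ∧ i = i' := by
  have h1 : bs r (b * r ^ i) = bs r (b' * r ^ i') := by rw [h]
  rw [bs_mul_pow hr hb, bs_mul_pow hr hb'] at h1
  have h2 : vv r (b * r ^ i) = vv r (b' * r ^ i') := by rw [h]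
  rw [vv_mul_pow hr hb, vv_mul_pow hr hb'] at h2
  exact ⟨h1, h2⟩

omit hr

lemma mem_dM : ∀ {m b x : ℕ}, x ∈ dM r b m → ∃ i, x = b * r ^ i := by
  intro m
  induction m using Nat.strong_induction_on with
  | _ m ih =>
    intro b x hx
    rw [dM] at hx
    by_cases h : 2 ≤ r ∧ m ≠ 0
    · rw [dif_pos h] at hx
      rcases Multiset.mem_add.mp hx with h1 | h1
      · exact ⟨0, by simpa using (Multiset.eq_of_mem_replicate h1)⟩
      · obtain ⟨i, hi⟩ := ih (m / r) (Nat.div_lt_self (Nat.pos_of_ne_zero h.2) h.1) h1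
        exact ⟨i + 1, by rw [hi]; ring⟩
    · rw [dif_neg h] at hx; simp at hx

include hr

lemma count_dM : ∀ {m b i : ℕ}, b ≠ 0 → (dM r b m).count (b * r ^ i) = m / r ^ i % r := by
  intro m
  induction m using Nat.strong_induction_on with
  | _ m ih =>
    intro b i hb
    by_cases h : m = 0
    · subst h; rw [dM]; simp
    · rw [dM, dif_pos ⟨hr, h⟩, Multiset.count_add]
      have hlt : m / r < m := Nat.div_lt_self (Nat.pos_of_ne_zero h) hr
      cases i with
      | zero =>
        rw [pow_zero, mul_one, Multiset.count_replicate, if_pos rfl]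
        have h0 : (dM r (r * b) (m / r)).count b = 0 := by
          apply Multiset.count_eq_zero_of_notMem
          intro hmem
          obtain ⟨i', hi'⟩ := mem_dM hmem
          have hge : 1 ≤ r ^ i' := Nat.one_le_two_pow.trans (Nat.pow_le_pow_left (by omega) i')
          have hb1 : 1 ≤ b := Nat.pos_of_ne_zero hb
          have h2b : 2 * b * 1 ≤ r * b * r ^ i' :=
            Nat.mul_le_mul (Nat.mul_le_mul hr (le_refl b)) hge
          omega
        rw [h0]; simp
      | succ i =>
        have h1 : (Multiset.replicate (m % r) b).count (b * r ^ (i + 1)) = 0 := by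
          rw [Multiset.count_replicate, if_neg]
          intro he
          have hge : 1 ≤ r ^ i := Nat.one_le_two_pow.trans (Nat.pow_le_pow_left (by omega) i)
          have : b * r ^ (i + 1) ≥ b * 2 := by
            have : 2 ≤ r ^ (i + 1) := le_trans (by omega) (Nat.le_self_pow (by omega) r)
            exact Nat.mul_le_mul_left b this
          omega
        have h2 : b * r ^ (i + 1) = (r * b) * r ^ i := by ring
        rw [h1, h2, ih (m / r) hlt (by positivity), zero_add, Nat.div_div_eq_div_mul]
        congr 2
        ring

lemma sum_dM : ∀ {m b : ℕ}, (dM r b m).sum = b * m := by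
  intro m
  induction m using Nat.strong_induction_on with
  | _ m ih =>
    intro b
    by_cases h : m = 0
    · subst h; rw [dM]; simp
    · rw [dM, dif_pos ⟨hr, h⟩, Multiset.sum_add, Multiset.sum_replicate,
        ih (m / r) (Nat.div_lt_self (Nat.pos_of_ne_zero h) hr)]
      rw [smul_eq_mul]
      have hmd := Nat.mod_add_div m r
      calc m % r * b + r * b * (m / r) = b * (m % r + r * (m / r)) := by ring
        _ = b * m := by rw [hmd]

section GlLemmas

variable {s : Multiset ℕ} (hs : ∀ y ∈ s, y ≠ 0 ∧ ¬ r ∣ y)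

include hs

lemma count_Gl {b : ℕ} (hb : b ≠ 0) (hnb : ¬ r ∣ b) (i : ℕ) :
    (Gl r s).count (b * r ^ i) = s.count b / r ^ i % r := by
  rw [Gl, Multiset.count_sum']
  by_cases hmem : b ∈ s.toFinset
  · rw [Finset.sum_eq_single_of_mem b hmem]
    · exact count_dM hr hb
    · intro b' hb' hne
      apply Multiset.count_eq_zero_of_notMem
      intro hx
      obtain ⟨i', hi'⟩ := mem_dM hx
      obtain ⟨hb'0, hb'nd⟩ := hs b' (Multiset.mem_toFinset.mp hb')
      exact hne ((base_eq hr hb'nd hnb hi'.symm).1)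
  · rw [Finset.sum_eq_zero, Multiset.count_eq_zero_of_notMem (fun hc => hmem (Multiset.mem_toFinset.mpr hc))]
    · simp
    · intro b' hb'
      apply Multiset.count_eq_zero_of_notMem
      intro hx
      obtain ⟨i', hi'⟩ := mem_dM hx
      obtain ⟨hb'0, hb'nd⟩ := hs b' (Multiset.mem_toFinset.mp hb')
      have := (base_eq hr hb'nd hnb hi'.symm).1
      subst this
      exact hmem hb'

lemma mem_Gl_ne_zero {x : ℕ} (hx : x ∈ Gl r s) : x ≠ 0 := by
  rw [Gl] at hx
  obtain ⟨b, hb, hxb⟩ := Multiset.mem_sum.mp hx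
  obtain ⟨i, hi⟩ := mem_dM hxb
  obtain ⟨hb0, -⟩ := hs b (Multiset.mem_toFinset.mp hb)
  rw [hi]
  positivity

lemma count_Gl' {x : ℕ} (hx : x ≠ 0) :
    (Gl r s).count x = s.count (bs r x) / r ^ vv r x % r := by
  conv_lhs => rw [← bs_mul_pow_vv hr x]
  exact count_Gl hr hs (bs_ne_zero hr hx) (not_dvd_bs hr x hx) _

lemma count_Gl_lt (x : ℕ) : (Gl r s).count x < r := by
  by_cases hx : x = 0
  · subst hx
    rw [Multiset.count_eq_zero_of_notMem (fun hc => (mem_Gl_ne_zero hr hs hc) rfl)]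
    omega
  · rw [count_Gl' hr hs hx]
    exact Nat.mod_lt _ (by omega)

lemma mem_Gl_iff {x : ℕ} (hx : x ≠ 0) :
    x ∈ Gl r s ↔ s.count (bs r x) / r ^ vv r x % r ≠ 0 := by
  rw [← Multiset.count_pos, count_Gl' hr hs hx]
  omega

lemma sum_Gl : (Gl r s).sum = s.sum := by
  rw [Gl]
  rw [Multiset.sum_sum]
  calc ∑ b ∈ s.toFinset, (dM r b (s.count b)).sum
      = ∑ b ∈ s.toFinset, s.count b • b := by
        apply Finset.sum_congr rfl
        intro b _
        rw [sum_dM hr, smul_eq_mul, mul_comm]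
    _ = s.sum := by
        conv_rhs => rw [← Multiset.toFinset_sum_count_nsmul_eq s]
        rw [Multiset.sum_sum]
        apply Finset.sum_congr rfl
        intro b _
        rw [Multiset.nsmul_singleton, Multiset.sum_replicate, smul_eq_mul]

end GlLemmas

lemma bs_dvd (x : ℕ) : bs r x ∣ x := ⟨r ^ vv r x, (bs_mul_pow_vv hr x).symm⟩

lemma sum_Hl (s : Multiset ℕ) : (Hl r s).sum = s.sum := by
  rw [Hl, Multiset.sum_bind]
  apply congrArg
  rw [Multiset.map_congr rfl]
  · exact (Multiset.map_id s)
  intro x _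
  rw [Multiset.sum_replicate, smul_eq_mul]
  exact Nat.div_mul_cancel (bs_dvd hr x)

lemma mem_Hl {y : ℕ} {s : Multiset ℕ} (hy : y ∈ Hl r s) : ∃ x ∈ s, y = bs r x := by
  rw [Hl] at hy
  obtain ⟨x, hx, hyx⟩ := Multiset.mem_bind.mp hy
  exact ⟨x, hx, (Multiset.eq_of_mem_replicate hyx)⟩

lemma Hl_O0 {s : Multiset ℕ} (hs : ∀ x ∈ s, x ≠ 0) :
    ∀ y ∈ Hl r s, y ≠ 0 ∧ ¬ r ∣ y := by
  intro y hy
  obtain ⟨x, hx, rfl⟩ := mem_Hl hr hy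
  exact ⟨bs_ne_zero hr (hs x hx), not_dvd_bs hr x (hs x hx)⟩

lemma Hl_replicate (c x : ℕ) :
    Hl r (Multiset.replicate c x) = Multiset.replicate (c * (x / bs r x)) (bs r x) := by
  induction c with
  | zero => simp [Hl]
  | succ c ih =>
    rw [Multiset.replicate_succ, Hl, Multiset.cons_bind, ← Hl, ih, ← Multiset.replicate_add]
    congr 1
    ring

lemma Hl_dM {b : ℕ} (hb : ¬ r ∣ b) :
    ∀ {m k : ℕ}, Hl r (dM r (b * r ^ k) m) = Multiset.replicate (r ^ k * m) b := by
  intro m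
  induction m using Nat.strong_induction_on with
  | _ m ih =>
    intro k
    have hb0 : b ≠ 0 := by rintro rfl; exact hb (dvd_zero r)
    by_cases h : m = 0
    · subst h; rw [dM]; simp [Hl]
    · rw [dM, dif_pos ⟨hr, h⟩, Hl, Multiset.add_bind, ← Hl, ← Hl, Hl_replicate hr,
        bs_mul_pow hr hb]
      have h2 : r * (b * r ^ k) = b * r ^ (k + 1) := by ring
      rw [h2, ih (m / r) (Nat.div_lt_self (Nat.pos_of_ne_zero h) hr)]
      have h3 : b * r ^ k / b = r ^ k := Nat.mul_div_cancel_left _ (Nat.pos_of_ne_zero hb0)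
      rw [h3, ← Multiset.replicate_add]
      congr 1
      have := Nat.mod_add_div m r
      calc m % r * r ^ k + r ^ (k + 1) * (m / r) = r ^ k * (m % r + r * (m / r)) := by ring
        _ = r ^ k * m := by rw [this]

lemma Hl_dM' {b : ℕ} (hb : ¬ r ∣ b) (m : ℕ) : Hl r (dM r b m) = Multiset.replicate m b := by
  have := Hl_dM hr hb (m := m) (k := 0)
  simpa using this

lemma Hl_add (s t : Multiset ℕ) : Hl r (s + t) = Hl r s + Hl r t := Multiset.add_bind _ _ _

lemma Hl_Gl {s : Multiset ℕ} (hs : ∀ y ∈ s, y ≠ 0 ∧ ¬ r ∣ y) : Hl r (Gl r s) = s := by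
  rw [Gl]
  have hsum : ∀ (F : Finset ℕ), (∀ b ∈ F, b ≠ 0 ∧ ¬ r ∣ b) →
      Hl r (∑ b ∈ F, dM r b (s.count b)) = ∑ b ∈ F, Multiset.replicate (s.count b) b := by
    intro F
    induction F using Finset.cons_induction with
    | empty => intro _; simp [Hl]
    | cons a F ha ih =>
      intro hF
      rw [Finset.sum_cons, Finset.sum_cons, Hl_add hr, ih (fun b hb => hF b (Finset.mem_cons_of_mem hb)),
        Hl_dM' hr (hF a (Finset.mem_cons_self a F)).2]
  rw [hsum s.toFinset (fun b hb => hs b (Multiset.mem_toFinset.mp hb))]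
  conv_rhs => rw [← Multiset.toFinset_sum_count_nsmul_eq s]
  apply Finset.sum_congr rfl
  intro b _
  rw [Multiset.nsmul_singleton]

lemma vv_lt_self {x : ℕ} (hx : x ≠ 0) : vv r x < x := by
  conv_rhs => rw [← bs_mul_pow_vv hr x]
  have h1 : 1 ≤ bs r x := Nat.pos_of_ne_zero (bs_ne_zero hr hx)
  calc vv r x < 2 ^ vv r x := Nat.lt_two_pow_self
    _ ≤ r ^ vv r x := Nat.pow_le_pow_left hr _
    _ ≤ bs r x * r ^ vv r x := Nat.le_mul_of_pos_left _ h1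

lemma geom_lt {c : ℕ → ℕ} (hc : ∀ j, c j < r) : ∀ i, (∑ j ∈ Finset.range i, r ^ j * c j) < r ^ i := by
  intro i
  induction i with
  | zero => simp
  | succ i ih =>
    rw [Finset.sum_range_succ, pow_succ]
    have h1 : r ^ i * c i ≤ r ^ i * (r - 1) := Nat.mul_le_mul_left _ (by have := hc i; omega)
    have h3 : r ^ i * (r - 1) + r ^ i = r ^ i * r := by
      have h4 : r - 1 + 1 = r := by omega
      calc r ^ i * (r - 1) + r ^ i = r ^ i * (r - 1 + 1) := by ring
        _ = r ^ i * r := by rw [h4]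
    omega

lemma extract {c : ℕ → ℕ} (hc : ∀ j, c j < r) {N i : ℕ} (hi : i < N) :
    (∑ j ∈ Finset.range N, r ^ j * c j) / r ^ i % r = c i := by
  have hsplit : ∑ j ∈ Finset.range N, r ^ j * c j
      = (∑ j ∈ Finset.range i, r ^ j * c j) + ∑ j ∈ Finset.Ico i N, r ^ j * c j := by
    rw [Finset.range_eq_Ico, Finset.range_eq_Ico]
    exact (Finset.sum_Ico_consecutive (fun j => r ^ j * c j) (m := 0) (n := i) (k := N) (by omega) (by omega)).symm
  have hico : ∑ j ∈ Finset.Ico i N, r ^ j * c j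
      = r ^ i * ∑ k ∈ Finset.range (N - i), r ^ k * c (i + k) := by
    rw [Finset.sum_Ico_eq_sum_range, Finset.mul_sum]
    apply Finset.sum_congr rfl
    intro k _
    rw [pow_add]
    ring
  have hNi : N - i = (N - i - 1) + 1 := by omega
  have hpeel : ∑ k ∈ Finset.range (N - i), r ^ k * c (i + k)
      = c i + r * ∑ k ∈ Finset.range (N - i - 1), r ^ k * c (i + 1 + k) := by
    rw [hNi, Finset.sum_range_succ']
    simp only [pow_zero, one_mul, add_zero]
    rw [add_comm]
    congr 1
    rw [Finset.mul_sum]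
    apply Finset.sum_congr rfl
    intro k _
    rw [pow_succ]
    have : i + (k + 1) = i + 1 + k := by omega
    rw [this]
    ring
  rw [hsplit, hico, hpeel]
  have hL : (∑ j ∈ Finset.range i, r ^ j * c j) < r ^ i := geom_lt hr hc i
  have hpos : 0 < r ^ i := Nat.pow_pos (by omega)
  rw [Nat.add_mul_div_left _ _ hpos, Nat.div_eq_of_lt hL, zero_add,
    Nat.add_mul_mod_self_left, Nat.mod_eq_of_lt (hc i)]

lemma count_Hl {ν : Multiset ℕ} (hν : ∀ x ∈ ν, x ≠ 0) {b : ℕ} (hb : b ≠ 0) (hnb : ¬ r ∣ b)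
    {N : ℕ} (hN : ∀ x ∈ ν, vv r x < N) :
    (Hl r ν).count b = ∑ j ∈ Finset.range N, r ^ j * ν.count (b * r ^ j) := by
  induction ν using Multiset.induction_on with
  | empty => simp [Hl]
  | cons x ν ih =>
    have hx0 : x ≠ 0 := hν x (Multiset.mem_cons_self x ν)
    have hν' : ∀ y ∈ ν, y ≠ 0 := fun y hy => hν y (Multiset.mem_cons_of_mem hy)
    have hN' : ∀ y ∈ ν, vv r y < N := fun y hy => hN y (Multiset.mem_cons_of_mem hy)
    rw [Hl, Multiset.cons_bind, ← Hl, Multiset.count_add, ih hν' hN',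
      Multiset.count_replicate]
    have hrhs : ∀ j, (x ::ₘ ν).count (b * r ^ j) = ν.count (b * r ^ j) + (if b * r ^ j = x then 1 else 0) := by
      intro j
      rw [Multiset.count_cons]
    simp only [hrhs, Nat.mul_add, Finset.sum_add_distrib]
    rw [add_comm]
    congr 1
    by_cases hbx : bs r x = b
    · rw [if_pos hbx]
      have hxf : x = b * r ^ vv r x := by rw [← hbx]; exact (bs_mul_pow_vv hr x).symm
      rw [Finset.sum_eq_single_of_mem (vv r x) (Finset.mem_range.mpr (hN x (Multiset.mem_cons_self x ν)))]
      · rw [if_pos hxf.symm, mul_one]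
        exact Nat.div_eq_of_eq_mul_right (Nat.pos_of_ne_zero (bs_ne_zero hr hx0))
          (bs_mul_pow_vv hr x).symm
      · intro j _ hj
        rw [if_neg, mul_zero]
        intro he
        rw [hxf] at he
        exact hj (base_eq hr hnb hnb he).2
    · rw [if_neg hbx, Finset.sum_eq_zero]
      intro j _
      rw [if_neg, mul_zero]
      intro he
      have : bs r (b * r ^ j) = bs r x := by rw [he]
      rw [bs_mul_pow hr hnb] at this
      exact hbx this.symm

lemma Gl_Hl {ν : Multiset ℕ} (hν : ∀ x ∈ ν, x ≠ 0) (hcnt : ∀ a, ν.count a < r) :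
    Gl r (Hl r ν) = ν := by
  have hO0 : ∀ y ∈ Hl r ν, y ≠ 0 ∧ ¬ r ∣ y := Hl_O0 hr hν
  ext x
  by_cases hx : x = 0
  · subst hx
    rw [Multiset.count_eq_zero_of_notMem (fun hc => (mem_Gl_ne_zero hr hO0 hc) rfl),
      Multiset.count_eq_zero_of_notMem (fun hc => (hν 0 hc) rfl)]
  · rw [count_Gl' hr hO0 hx]
    set b := bs r x with hbdef
    set i := vv r x with hidef
    set N := ν.sum + i + 1 with hNdef
    have hN : ∀ y ∈ ν, vv r y < N := by
      intro y hy
      have h1 : vv r y < y := vv_lt_self hr (hν y hy)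
      have h2 : y ≤ ν.sum := Multiset.single_le_sum (fun z _ => Nat.zero_le z) y hy
      omega
    rw [count_Hl hr hν (bs_ne_zero hr hx) (not_dvd_bs hr x hx) hN,
      extract hr (fun j => hcnt _) (show i < N by omega)]
    congr 1
    exact bs_mul_pow_vv hr x

omit hr

/-! ## Partitions as multisets -/

def PartMS (m : ℕ) : Finset (Multiset ℕ) :=
  Finset.univ.image (fun p : Nat.Partition m => p.parts)

lemma mem_PartMS {m : ℕ} {s : Multiset ℕ} : s ∈ PartMS m ↔ s.sum = m ∧ ∀ x ∈ s, x ≠ 0 := by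
  constructor
  · intro hs
    rw [PartMS, Finset.mem_image] at hs
    obtain ⟨p, -, rfl⟩ := hs
    exact ⟨p.parts_sum, fun x hx => (p.parts_pos hx).ne'⟩
  · rintro ⟨h1, h2⟩
    rw [PartMS, Finset.mem_image]
    exact ⟨⟨s, fun {x} hx => Nat.pos_of_ne_zero (h2 x hx), h1⟩, Finset.mem_univ _, rfl⟩

lemma sum_partition {n : ℕ} {M : Type*} [AddCommMonoid M] (Q : Multiset ℕ → Prop)
    [DecidablePred Q] (f : Multiset ℕ → M) :
    ∑ p ∈ Finset.univ.filter (fun p : Nat.Partition n => Q p.parts), f p.parts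
      = ∑ s ∈ (PartMS n).filter Q, f s := by
  have himg : (PartMS n).filter Q
      = Finset.image (fun p : Nat.Partition n => p.parts) (Finset.univ.filter (fun p => Q p.parts)) := by
    ext s
    simp only [Finset.mem_filter, Finset.mem_image, PartMS, Finset.mem_univ, true_and]
    constructor
    · rintro ⟨⟨p, -, rfl⟩, hq⟩
      exact ⟨p, hq, rfl⟩
    · rintro ⟨p, hq, rfl⟩
      exact ⟨⟨p, rfl⟩, hq⟩
  rw [himg, Finset.sum_image]
  intro p _ q _ h
  exact Nat.Partition.ext h

def AllParts (n : ℕ) : Finset (Multiset ℕ) := (Finset.range (n+1)).biUnion PartMS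

lemma mem_AllParts {n : ℕ} {s : Multiset ℕ} : s ∈ AllParts n ↔ s.sum ≤ n ∧ ∀ x ∈ s, x ≠ 0 := by
  rw [AllParts, Finset.mem_biUnion]
  constructor
  · rintro ⟨m, hm, hs⟩
    rw [mem_PartMS] at hs
    rw [Finset.mem_range] at hm
    exact ⟨by omega, hs.2⟩
  · rintro ⟨h1, h2⟩
    exact ⟨s.sum, Finset.mem_range.mpr (by omega), mem_PartMS.mpr ⟨rfl, h2⟩⟩

lemma msum_le_of_le {s t : Multiset ℕ} (h : s ≤ t) : s.sum ≤ t.sum := by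
  obtain ⟨u, rfl⟩ := Multiset.le_iff_exists_add.mp h
  rw [Multiset.sum_add]
  omega

lemma mem_of_mem_sub {s t : Multiset ℕ} {x : ℕ} (h : x ∈ s - t) : x ∈ s :=
  Multiset.mem_of_le (Multiset.sub_le_self s t) h

/-! ## The two split bijections -/

def ODom (r n j : ℕ) : Finset (Multiset ℕ × Multiset ℕ) :=
  ((AllParts n) ×ˢ (AllParts n)).filter fun q =>
    q.1.sum + r * q.2.sum = n ∧ (∀ x ∈ q.1, ¬ r ∣ x) ∧ q.2.toFinset.card = j

lemma mem_ODom {r n j : ℕ} (hr : 2 ≤ r) {q : Multiset ℕ × Multiset ℕ} :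
    q ∈ ODom r n j ↔ q.1.sum + r * q.2.sum = n ∧ (∀ x ∈ q.1, x ≠ 0 ∧ ¬ r ∣ x)
      ∧ (∀ x ∈ q.2, x ≠ 0) ∧ q.2.toFinset.card = j := by
  rw [ODom, Finset.mem_filter, Finset.mem_product, mem_AllParts, mem_AllParts]
  constructor
  · rintro ⟨⟨⟨-, hp1⟩, -, hp2⟩, hsum, hnd, hcard⟩
    exact ⟨hsum, fun x hx => ⟨hp1 x hx, hnd x hx⟩, hp2, hcard⟩
  · rintro ⟨hsum, h1, h2, hcard⟩
    have hs2 : q.2.sum ≤ r * q.2.sum := Nat.le_mul_of_pos_left _ (by omega)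
    exact ⟨⟨⟨by omega, fun x hx => (h1 x hx).1⟩, by omega, h2⟩, hsum,
      fun x hx => (h1 x hx).2, hcard⟩

def DDom (r n j : ℕ) : Finset (Multiset ℕ × Multiset ℕ) :=
  ((AllParts n) ×ˢ (AllParts n)).filter fun q =>
    q.1.sum + r * q.2.sum = n ∧ (∀ a ∈ q.1, q.1.count a < r) ∧ q.2.toFinset.card = j

lemma mem_DDom {r n j : ℕ} (hr : 2 ≤ r) {q : Multiset ℕ × Multiset ℕ} :
    q ∈ DDom r n j ↔ q.1.sum + r * q.2.sum = n ∧ (∀ x ∈ q.1, x ≠ 0) ∧ (∀ a, q.1.count a < r)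
      ∧ (∀ x ∈ q.2, x ≠ 0) ∧ q.2.toFinset.card = j := by
  rw [DDom, Finset.mem_filter, Finset.mem_product, mem_AllParts, mem_AllParts]
  constructor
  · rintro ⟨⟨⟨-, hp1⟩, -, hp2⟩, hsum, hlt, hcard⟩
    refine ⟨hsum, hp1, ?_, hp2, hcard⟩
    intro a
    by_cases ha : a ∈ q.1
    · exact hlt a ha
    · rw [Multiset.count_eq_zero_of_notMem ha]; omega
  · rintro ⟨hsum, h1, hlt, h2, hcard⟩
    have hs2 : q.2.sum ≤ r * q.2.sum := Nat.le_mul_of_pos_left _ (by omega)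
    exact ⟨⟨⟨by omega, h1⟩, by omega, h2⟩, hsum, fun a _ => hlt a, hcard⟩

lemma map_div_mul_cancel (r : ℕ) (t : Multiset ℕ) (ht : ∀ x ∈ t, r ∣ x) :
    (t.map (· / r)).map (r * ·) = t := by
  rw [Multiset.map_map]
  conv_rhs => rw [← Multiset.map_id t]
  apply Multiset.map_congr rfl
  intro x hx
  exact Nat.mul_div_cancel' (ht x hx)

lemma sum_map_div (r : ℕ) (t : Multiset ℕ) (ht : ∀ x ∈ t, r ∣ x) :
    r * (t.map (· / r)).sum = t.sum := by
  rw [← Multiset.sum_map_mul_left]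
  conv_rhs => rw [← Multiset.map_id t]
  apply congrArg Multiset.sum
  apply Multiset.map_congr rfl
  intro x hx
  exact Nat.mul_div_cancel' (ht x hx)

lemma sum_map_rmul {r : ℕ} (t : Multiset ℕ) : (t.map (r * ·)).sum = r * t.sum := by
  have := Multiset.sum_map_mul_left (a := r) (f := id) (s := t)
  simpa using this

lemma O_split {M : Type*} [AddCommMonoid M] {r : ℕ} (hr : 2 ≤ r) (n j : ℕ)
    (f : Multiset ℕ → M) :
    ∑ s ∈ (PartMS n).filter (fun s => (s.toFinset.filter fun i => r ∣ i).card = j), f s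
      = ∑ q ∈ ODom r n j, f (q.1 + q.2.map (r * ·)) := by
  have hr0 : r ≠ 0 := by omega
  apply Finset.sum_nbij'
    (i := fun s => (s.filter (fun x => ¬ r ∣ x), (s.filter (fun x => r ∣ x)).map (· / r)))
    (j := fun q => q.1 + q.2.map (r * ·))
  · -- maps into ODom
    intro s hs
    rw [Finset.mem_filter, mem_PartMS] at hs
    obtain ⟨⟨hsum, hpos⟩, hcard⟩ := hs
    rw [mem_ODom hr]
    refine ⟨?_, ?_, ?_, ?_⟩
    · dsimp only
      rw [sum_map_div r (s.filter (fun x => r ∣ x)) (fun x hx => Multiset.of_mem_filter hx)]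
      rw [← Multiset.sum_add]
      rw [← hsum]
      congr 1
      rw [add_comm]
      exact Multiset.filter_add_not _ s
    · intro x hx
      have hx' : x ∈ Multiset.filter (fun x => ¬ r ∣ x) s := hx
      exact ⟨hpos x (Multiset.mem_of_mem_filter hx'), (Multiset.mem_filter.mp hx').2⟩
    · intro x hx
      simp only [Multiset.mem_map] at hx
      obtain ⟨y, hy, rfl⟩ := hx
      have hdvd := Multiset.of_mem_filter hy
      have hy0 := hpos y (Multiset.mem_of_mem_filter hy)
      have : r ≤ y := Nat.le_of_dvd (Nat.pos_of_ne_zero hy0) hdvd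
      have : 1 ≤ y / r := (Nat.one_le_div_iff (by omega)).mpr this
      show y / r ≠ 0
      omega
    · dsimp only
      rw [Multiset.toFinset_map, Multiset.toFinset_filter]
      rw [Finset.card_image_of_injOn, hcard]
      intro x hx y hy hxy
      simp only [Finset.coe_filter, Set.mem_setOf_eq] at hx hy
      obtain ⟨u, rfl⟩ := hx.2
      obtain ⟨v, rfl⟩ := hy.2
      dsimp only at hxy
      rw [Nat.mul_div_cancel_left u (by omega : 0 < r),
        Nat.mul_div_cancel_left v (by omega : 0 < r)] at hxy
      rw [hxy]
  · -- maps back into PartMS filter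
    intro q hq
    rw [mem_ODom hr] at hq
    obtain ⟨hsum, h1, h2, hcard⟩ := hq
    rw [Finset.mem_filter, mem_PartMS]
    refine ⟨⟨?_, ?_⟩, ?_⟩
    · rw [Multiset.sum_add, sum_map_rmul]
      exact hsum
    · intro x hx
      rcases Multiset.mem_add.mp hx with h | h
      · exact (h1 x h).1
      · obtain ⟨y, hy, rfl⟩ := Multiset.mem_map.mp h
        have := h2 y hy
        positivity
    · rw [Multiset.toFinset_add, Finset.filter_union, Multiset.toFinset_map]
      rw [Finset.filter_false_of_mem (fun x hx => (h1 x (Multiset.mem_toFinset.mp hx)).2)]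
      rw [Finset.filter_true_of_mem]
      · rw [Finset.empty_union, Finset.card_image_of_injective _ (mul_right_injective₀ hr0)]
        exact hcard
      · intro x hx
        obtain ⟨y, hy, rfl⟩ := Finset.mem_image.mp hx
        exact Dvd.intro y rfl
  · -- left inverse
    intro s hs
    rw [Finset.mem_filter, mem_PartMS] at hs
    dsimp only
    rw [map_div_mul_cancel r (s.filter (fun x => r ∣ x)) (fun x hx => Multiset.of_mem_filter hx), add_comm]
    exact Multiset.filter_add_not _ s
  · -- right inverse
    intro q hq
    rw [mem_ODom hr] at hq
    obtain ⟨hsum, h1, h2, hcard⟩ := hq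
    have hfilt1 : Multiset.filter (fun x => ¬ r ∣ x) (q.1 + q.2.map (r * ·)) = q.1 := by
      rw [Multiset.filter_add, Multiset.filter_eq_self.mpr (fun x hx => (h1 x hx).2),
        Multiset.filter_eq_nil.mpr, add_zero]
      intro x hx hnd
      obtain ⟨y, hy, rfl⟩ := Multiset.mem_map.mp hx
      exact hnd (Dvd.intro y rfl)
    have hfilt2 : Multiset.filter (fun x => r ∣ x) (q.1 + q.2.map (r * ·)) = q.2.map (r * ·) := by
      rw [Multiset.filter_add, Multiset.filter_eq_nil.mpr (fun x hx => (h1 x hx).2),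
        Multiset.filter_eq_self.mpr, zero_add]
      intro x hx
      obtain ⟨y, hy, rfl⟩ := Multiset.mem_map.mp hx
      exact Dvd.intro y rfl
    ext : 1
    · dsimp only
      exact hfilt1
    · dsimp only
      rw [hfilt2, Multiset.map_map]
      conv_rhs => rw [← Multiset.map_id q.2]
      apply Multiset.map_congr rfl
      intro x hx
      simp only [Function.comp_apply, id_eq]
      exact Nat.mul_div_cancel_left x (by omega)
  · -- f transport
    intro s hs
    rw [Finset.mem_filter, mem_PartMS] at hs
    dsimp only
    rw [map_div_mul_cancel r (s.filter (fun x => r ∣ x)) (fun x hx => Multiset.of_mem_filter hx), add_comm,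
      Multiset.filter_add_not]

def mdiv (r : ℕ) (s : Multiset ℕ) : Multiset ℕ :=
  ∑ a ∈ s.toFinset, Multiset.replicate (s.count a / r) a

lemma count_mdiv (r : ℕ) (s : Multiset ℕ) (x : ℕ) : (mdiv r s).count x = s.count x / r := by
  rw [mdiv, Multiset.count_sum']
  rw [Finset.sum_congr rfl (fun a _ => Multiset.count_replicate x a _)]
  rw [Finset.sum_ite_eq' s.toFinset x (fun a => s.count a / r)]
  by_cases h : x ∈ s.toFinset
  · rw [if_pos h]
  · rw [if_neg h]
    rw [Multiset.count_eq_zero_of_notMem (fun hc => h (Multiset.mem_toFinset.mpr hc)), Nat.zero_div]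

lemma D_split {M : Type*} [AddCommMonoid M] {r : ℕ} (hr : 2 ≤ r) (n j : ℕ)
    (f : Multiset ℕ → M) :
    ∑ s ∈ (PartMS n).filter (fun s => (s.toFinset.filter fun i => r ≤ s.count i).card = j), f s
      = ∑ q ∈ DDom r n j, f (q.1 + r • q.2) := by
  have hr0 : r ≠ 0 := by omega
  have hkey : ∀ s : Multiset ℕ, (s - r • mdiv r s) + r • mdiv r s = s := by
    intro s
    ext a
    rw [Multiset.count_add, Multiset.count_sub, Multiset.count_nsmul, count_mdiv]
    have h1 : r * (s.count a / r) ≤ s.count a := Nat.mul_div_le _ _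
    omega
  apply Finset.sum_nbij'
    (i := fun s => (s - r • mdiv r s, mdiv r s))
    (j := fun q => q.1 + r • q.2)
  · -- maps into DDom
    intro s hs
    rw [Finset.mem_filter, mem_PartMS] at hs
    obtain ⟨⟨hsum, hpos⟩, hcard⟩ := hs
    rw [mem_DDom hr]
    refine ⟨?_, ?_, ?_, ?_, ?_⟩
    · dsimp only
      have := congrArg Multiset.sum (hkey s)
      rw [Multiset.sum_add, Multiset.sum_nsmul, smul_eq_mul] at this
      rw [← hsum, ← this]
    · intro x hx
      exact hpos x (mem_of_mem_sub hx)
    · intro a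
      dsimp only
      rw [Multiset.count_sub, Multiset.count_nsmul, count_mdiv]
      have h1 : r * (s.count a / r) ≤ s.count a := Nat.mul_div_le _ _
      have h2 := Nat.mod_add_div (s.count a) r
      have h3 : s.count a % r < r := Nat.mod_lt _ (by omega)
      omega
    · intro x hx
      have hc := Multiset.count_pos.mpr hx
      rw [count_mdiv] at hc
      have : r ≤ s.count x := by
        by_contra hlt
        rw [Nat.div_eq_of_lt (by omega)] at hc
        omega
      have : x ∈ s := Multiset.count_pos.mp (by omega)
      exact hpos x this
    · dsimp only
      rw [← hcard]
      congr 1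
      ext a
      rw [Multiset.mem_toFinset, Finset.mem_filter, Multiset.mem_toFinset]
      constructor
      · intro ha
        have hc := Multiset.count_pos.mpr ha
        rw [count_mdiv] at hc
        have hge : r ≤ s.count a := by
          by_contra hlt
          rw [Nat.div_eq_of_lt (by omega)] at hc
          omega
        exact ⟨Multiset.count_pos.mp (by omega), hge⟩
      · rintro ⟨-, hge⟩
        apply Multiset.count_pos.mp
        rw [count_mdiv]
        exact Nat.div_pos hge (by omega)
  · -- maps back
    intro q hq
    rw [mem_DDom hr] at hq
    obtain ⟨hsum, h1, hlt, h2, hcard⟩ := hq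
    rw [Finset.mem_filter, mem_PartMS]
    refine ⟨⟨?_, ?_⟩, ?_⟩
    · rw [Multiset.sum_add, Multiset.sum_nsmul, smul_eq_mul]
      exact hsum
    · intro x hx
      rcases Multiset.mem_add.mp hx with h | h
      · exact h1 x h
      · exact h2 x (Multiset.mem_nsmul.mp h).2
    · rw [← hcard]
      congr 1
      ext a
      rw [Finset.mem_filter, Multiset.mem_toFinset, Multiset.mem_toFinset]
      have hca : (q.1 + r • q.2).count a = q.1.count a + r * q.2.count a := by
        rw [Multiset.count_add, Multiset.count_nsmul]
      constructor
      · rintro ⟨-, hge⟩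
        rw [hca] at hge
        apply Multiset.count_pos.mp
        by_contra hc
        have h0 : q.2.count a = 0 := by omega
        rw [h0, Nat.mul_zero, Nat.add_zero] at hge
        have := hlt a
        omega
      · intro ha
        have hc := Multiset.count_pos.mpr ha
        constructor
        · rw [Multiset.mem_add]
          right
          exact Multiset.mem_nsmul.mpr ⟨hr0, ha⟩
        · rw [hca]
          have : r ≤ r * q.2.count a := Nat.le_mul_of_pos_right _ hc
          omega
  · -- left inverse
    intro s hs
    dsimp only
    exact hkey s
  · -- right inverse
    intro q hq
    rw [mem_DDom hr] at hq
    obtain ⟨hsum, h1, hlt, h2, hcard⟩ := hq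
    have hm : mdiv r (q.1 + r • q.2) = q.2 := by
      ext a
      rw [count_mdiv, Multiset.count_add, Multiset.count_nsmul]
      have := hlt a
      rw [Nat.add_mul_div_left _ _ (by omega : 0 < r), Nat.div_eq_of_lt this, zero_add]
    ext : 1
    · dsimp only
      rw [hm]
      ext a
      rw [Multiset.count_sub, Multiset.count_add, Multiset.count_nsmul]
      omega
    · dsimp only
      exact hm
  · -- f transport
    intro s hs
    dsimp only
    rw [hkey s]

/-! ## Glaisher transfer -/

lemma G_transfer {M : Type*} [AddCommMonoid M] {r : ℕ} (hr : 2 ≤ r) (n j : ℕ)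
    (F : Multiset ℕ × Multiset ℕ → M) :
    ∑ q ∈ DDom r n j, F q = ∑ q ∈ ODom r n j, F (Gl r q.1, q.2) := by
  apply Finset.sum_nbij'
    (i := fun q => (Hl r q.1, q.2))
    (j := fun q => (Gl r q.1, q.2))
  · intro q hq
    rw [mem_DDom hr] at hq
    obtain ⟨hsum, h1, hlt, h2, hcard⟩ := hq
    rw [mem_ODom hr]
    refine ⟨?_, ?_, h2, hcard⟩
    · dsimp only
      rw [sum_Hl hr]
      exact hsum
    · exact fun x hx => Hl_O0 hr h1 x hx
  · intro q hq
    rw [mem_ODom hr] at hq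
    obtain ⟨hsum, h1, h2, hcard⟩ := hq
    rw [mem_DDom hr]
    refine ⟨?_, ?_, ?_, h2, hcard⟩
    · dsimp only
      rw [sum_Gl hr h1]
      exact hsum
    · exact fun x hx => mem_Gl_ne_zero hr h1 hx
    · exact fun a => count_Gl_lt hr h1 a
  · intro q hq
    rw [mem_DDom hr] at hq
    obtain ⟨hsum, h1, hlt, h2, hcard⟩ := hq
    ext : 1
    · dsimp only
      exact Gl_Hl hr h1 hlt
    · rfl
  · intro q hq
    rw [mem_ODom hr] at hq
    obtain ⟨hsum, h1, h2, hcard⟩ := hq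
    ext : 1
    · dsimp only
      exact Hl_Gl hr h1
    · rfl
  · intro q hq
    rw [mem_DDom hr] at hq
    obtain ⟨hsum, h1, hlt, h2, hcard⟩ := hq
    dsimp only
    rw [Gl_Hl hr h1 hlt]

/-! ## Statistics -/

lemma stat_O {r : ℕ} (hr : 2 ≤ r) {s t : Multiset ℕ} (hs : ∀ x ∈ s, x ≠ 0 ∧ ¬ r ∣ x) :
    (s + t.map (r * ·)).toFinset.card = s.toFinset.card + t.toFinset.card := by
  rw [Multiset.toFinset_add, Multiset.toFinset_map, Finset.card_union_of_disjoint,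
    Finset.card_image_of_injective _ (mul_right_injective₀ (by omega : r ≠ 0))]
  rw [Finset.disjoint_left]
  intro x hx hximg
  obtain ⟨y, hy, rfl⟩ := Finset.mem_image.mp hximg
  exact (hs _ (Multiset.mem_toFinset.mp hx)).2 (Dvd.intro y rfl)

lemma stat_D_union {r : ℕ} (hr : 2 ≤ r) (g t : Multiset ℕ) :
    (g + r • t).toFinset = g.toFinset ∪ t.toFinset := by
  rw [Multiset.toFinset_add, Multiset.toFinset_nsmul _ r (by omega)]

lemma count_comb {r : ℕ} (g t : Multiset ℕ) (a : ℕ) :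
    (g + r • t).count a = g.count a + r * t.count a := by
  rw [Multiset.count_add, Multiset.count_nsmul]

lemma stat_T {r : ℕ} (hr : 2 ≤ r) {g t : Multiset ℕ} (hg : ∀ a, g.count a < r) :
    ((g + r • t).toFinset.filter fun a =>
        r + 1 ≤ (g + r • t).count a ∧ (g + r • t).count a ≤ 2 * r - 1).card
      = (t.toFinset.filter fun a => t.count a = 1 ∧ a ∈ g).card := by
  apply congrArg Finset.card
  ext a
  simp only [Finset.mem_filter, stat_D_union hr, Finset.mem_union, Multiset.mem_toFinset,
    count_comb]
  have hga := hg a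
  constructor
  · rintro ⟨hmem, h1, h2⟩
    rcases Nat.lt_or_ge (t.count a) 1 with hct | hct
    · exfalso
      have : t.count a = 0 := by omega
      rw [this, Nat.mul_zero] at h1 h2
      omega
    rcases Nat.lt_or_ge (t.count a) 2 with hct2 | hct2
    · have hct1 : t.count a = 1 := by omega
      rw [hct1, Nat.mul_one] at h1 h2
      refine ⟨Multiset.count_pos.mp (by omega), hct1, Multiset.count_pos.mp (by omega)⟩
    · exfalso
      have : r * 2 ≤ r * t.count a := Nat.mul_le_mul_left r hct2
      omega
  · rintro ⟨hat, hct, hag⟩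
    have hcg : 1 ≤ g.count a := Multiset.count_pos.mpr hag
    rw [hct, Nat.mul_one]
    exact ⟨Or.inl hag, by omega, by omega⟩

lemma inter_split {r : ℕ} (hr : 2 ≤ r) (g t : Multiset ℕ) :
    (g.toFinset ∩ t.toFinset).card
      = (t.toFinset.filter fun a => t.count a = 1 ∧ a ∈ g).card
        + (t.toFinset.filter fun a => 2 ≤ t.count a ∧ a ∈ g).card := by
  rw [← Finset.card_union_of_disjoint]
  · apply congrArg Finset.card
    ext a
    rw [Finset.mem_union, Finset.mem_filter, Finset.mem_filter, Finset.mem_inter,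
      Multiset.mem_toFinset, Multiset.mem_toFinset]
    constructor
    · rintro ⟨hg, ht⟩
      have := Multiset.count_pos.mpr ht
      rcases Nat.lt_or_ge (t.count a) 2 with h | h
      · exact Or.inl ⟨ht, by omega, hg⟩
      · exact Or.inr ⟨ht, h, hg⟩
    · rintro (⟨ht, -, hg⟩ | ⟨ht, -, hg⟩) <;> exact ⟨hg, ht⟩
  · rw [Finset.disjoint_left]
    rintro a ha hb
    rw [Finset.mem_filter] at ha hb
    omega

lemma B_split {r : ℕ} (hr : 2 ≤ r) {s : Multiset ℕ} (hs : ∀ x ∈ s, x ≠ 0 ∧ ¬ r ∣ x) :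
    (Gl r s).toFinset.card = s.toFinset.card
      + ((Gl r s).toFinset.filter fun x => r ^ (vv r x + 1) ≤ s.count (bs r x)).card := by
  have hsplit := Finset.card_filter_add_card_filter_not
    (s := (Gl r s).toFinset) (p := fun x => r ^ (vv r x + 1) ≤ s.count (bs r x))
  have hneg : ((Gl r s).toFinset.filter fun x => ¬ r ^ (vv r x + 1) ≤ s.count (bs r x)).card
      = s.toFinset.card := by
    apply card_nbij_old (i := fun x => bs r x)
      (j := fun b => b * r ^ (Nat.log r (s.count b)))
    · -- maps into s.toFinset
      intro x hx
      rw [Finset.mem_filter, Multiset.mem_toFinset] at hx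
      obtain ⟨hxg, hP⟩ := hx
      have hx0 : x ≠ 0 := mem_Gl_ne_zero hr hs hxg
      have hcnt := (mem_Gl_iff hr hs hx0).mp hxg
      rw [Multiset.mem_toFinset, ← Multiset.count_pos]
      have h1 : 1 ≤ s.count (bs r x) / r ^ vv r x := by
        rcases Nat.eq_zero_or_pos (s.count (bs r x) / r ^ vv r x) with h0 | h0
        · rw [h0] at hcnt
          exact absurd (Nat.zero_mod r) hcnt
        · exact h0
      have hK : 0 < r ^ vv r x := Nat.pow_pos (by omega)
      have := (Nat.one_le_div_iff hK).mp h1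
      omega
    · -- maps into filtered Gl
      intro b hb
      rw [Multiset.mem_toFinset] at hb
      have hb0 : b ≠ 0 := (hs b hb).1
      have hbnd : ¬ r ∣ b := (hs b hb).2
      have hm : s.count b ≠ 0 := by
        have := Multiset.count_pos.mpr hb
        omega
      set L := Nat.log r (s.count b) with hL
      have hle : r ^ L ≤ s.count b := Nat.pow_log_le_self r hm
      have hlt : s.count b < r ^ (L + 1) := Nat.lt_pow_succ_log_self (by omega) _
      have hKpos : 0 < r ^ L := Nat.pow_pos (by omega)
      have hdivge : 1 ≤ s.count b / r ^ L := (Nat.one_le_div_iff hKpos).mpr hle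
      have hdivlt : s.count b / r ^ L < r := by
        rw [Nat.div_lt_iff_lt_mul hKpos]
        rw [pow_succ] at hlt
        calc s.count b < r ^ L * r := hlt
          _ = r * r ^ L := by ring
      have hvv : vv r (b * r ^ L) = L := vv_mul_pow hr hbnd L
      have hbs : bs r (b * r ^ L) = b := bs_mul_pow hr hbnd L
      rw [Finset.mem_filter, Multiset.mem_toFinset, hvv, hbs]
      constructor
      · rw [← Multiset.count_pos, count_Gl hr hs hb0 hbnd]
        rw [Nat.mod_eq_of_lt hdivlt]
        omega
      · omega
    · -- left inverse
      intro x hx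
      rw [Finset.mem_filter, Multiset.mem_toFinset] at hx
      obtain ⟨hxg, hP⟩ := hx
      have hx0 : x ≠ 0 := mem_Gl_ne_zero hr hs hxg
      have hcnt := (mem_Gl_iff hr hs hx0).mp hxg
      have hK : 0 < r ^ vv r x := Nat.pow_pos (by omega)
      have h1 : 1 ≤ s.count (bs r x) / r ^ vv r x := by
        rcases Nat.eq_zero_or_pos (s.count (bs r x) / r ^ vv r x) with h0 | h0
        · rw [h0] at hcnt
          exact absurd (Nat.zero_mod r) hcnt
        · exact h0
      have hle : r ^ vv r x ≤ s.count (bs r x) := (Nat.one_le_div_iff hK).mp h1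
      have hlog : Nat.log r (s.count (bs r x)) = vv r x :=
        Nat.log_eq_of_pow_le_of_lt_pow hle (by omega)
      rw [hlog]
      exact bs_mul_pow_vv hr x
    · -- right inverse
      intro b hb
      rw [Multiset.mem_toFinset] at hb
      exact bs_mul_pow hr (hs b hb).2 _
  omega

/-! ## The W set and core bijections -/

lemma shift_up {r : ℕ} (hr : 2 ≤ r) (c v : ℕ) :
    (c + r ^ (v + 1)) / r ^ v % r = c / r ^ v % r := by
  have hK : 0 < r ^ v := Nat.pow_pos (by omega)
  rw [pow_succ, Nat.add_mul_div_left _ _ hK, Nat.add_mod_right]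

lemma shift_down {r : ℕ} (hr : 2 ≤ r) {c v : ℕ} (h : r ^ (v + 1) ≤ c) :
    (c - r ^ (v + 1)) / r ^ v % r = c / r ^ v % r := by
  have hK : 0 < r ^ v := Nat.pow_pos (by omega)
  have hps : r ^ (v + 1) = r ^ v * r := pow_succ r v
  have hq : r ≤ c / r ^ v := by
    rw [Nat.le_div_iff_mul_le hK, mul_comm]
    rwa [← hps]
  have hmod := Nat.div_add_mod c (r ^ v)
  have hmlt : c % r ^ v < r ^ v := Nat.mod_lt _ hK
  set d := c / r ^ v - r with hd
  have hqd : c / r ^ v = d + r := by omega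
  have hc' : c - r ^ (v + 1) = r ^ v * d + c % r ^ v := by
    rw [hqd, Nat.mul_add] at hmod
    rw [hps]
    omega
  rw [hc', Nat.mul_add_div hK, Nat.div_eq_of_lt hmlt, Nat.add_zero, hqd, Nat.add_mod_right]

def Wset (r n j : ℕ) : Finset ((Multiset ℕ × Multiset ℕ) × ℕ) :=
  ((AllParts n ×ˢ AllParts n) ×ˢ Finset.range (n+1)).filter fun z =>
    z.1.1.sum + r * z.1.2.sum + r * z.2 = n ∧ (∀ x ∈ z.1.1, ¬ r ∣ x) ∧
      z.1.2.toFinset.card = j ∧ z.2 ∈ Gl r z.1.1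

lemma mem_Wset {r n j : ℕ} (hr : 2 ≤ r) {z : (Multiset ℕ × Multiset ℕ) × ℕ} :
    z ∈ Wset r n j ↔ z.1.1.sum + r * z.1.2.sum + r * z.2 = n
      ∧ (∀ x ∈ z.1.1, x ≠ 0 ∧ ¬ r ∣ x) ∧ (∀ x ∈ z.1.2, x ≠ 0)
      ∧ z.1.2.toFinset.card = j ∧ z.2 ∈ Gl r z.1.1 := by
  rw [Wset, Finset.mem_filter, Finset.mem_product, Finset.mem_product, mem_AllParts,
    mem_AllParts, Finset.mem_range]
  constructor
  · rintro ⟨⟨⟨⟨-, hp1⟩, -, hp2⟩, -⟩, hsum, hnd, hcard, hmem⟩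
    exact ⟨hsum, fun x hx => ⟨hp1 x hx, hnd x hx⟩, hp2, hcard, hmem⟩
  · rintro ⟨hsum, h1, h2, hcard, hmem⟩
    have hs2 : z.1.2.sum ≤ r * z.1.2.sum := Nat.le_mul_of_pos_left _ (by omega)
    have ha : z.2 ≤ r * z.2 := Nat.le_mul_of_pos_left _ (by omega)
    exact ⟨⟨⟨⟨by omega, fun x hx => (h1 x hx).1⟩, by omega, h2⟩, by omega⟩, hsum,
      fun x hx => (h1 x hx).2, hcard, hmem⟩

lemma L2core {r : ℕ} (hr : 2 ≤ r) (n j : ℕ) :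
    ((ODom r n j).sigma (fun q =>
        (Gl r q.1).toFinset.filter fun x => r ^ (vv r x + 1) ≤ q.1.count (bs r x))).card
      = (Wset r n j).card := by
  apply card_nbij_old
    (i := fun z => ((z.1.1 - Multiset.replicate (r ^ (vv r z.2 + 1)) (bs r z.2), z.1.2), z.2))
    (j := fun z => ⟨(z.1.1 + Multiset.replicate (r ^ (vv r z.2 + 1)) (bs r z.2), z.1.2), z.2⟩)
  · rintro ⟨⟨s, t⟩, x⟩ hz
    rw [Finset.mem_sigma] at hz
    obtain ⟨hq, hx⟩ := hz
    rw [mem_ODom hr] at hq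
    obtain ⟨hsum, hs, ht, hcard⟩ := hq
    rw [Finset.mem_filter, Multiset.mem_toFinset] at hx
    obtain ⟨hxg, hP⟩ := hx
    dsimp only at hsum hs ht hcard hxg hP ⊢
    have hx0 : x ≠ 0 := mem_Gl_ne_zero hr hs hxg
    have hcnt := (mem_Gl_iff hr hs hx0).mp hxg
    set u := Multiset.replicate (r ^ (vv r x + 1)) (bs r x) with hu
    have hule : u ≤ s := by
      rw [Multiset.le_iff_count]
      intro b
      rw [hu, Multiset.count_replicate]
      by_cases hb : bs r x = b
      · rw [if_pos hb, ← hb]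
        exact hP
      · rw [if_neg hb]
        omega
    have hadd : s - u + u = s := tsub_add_cancel_of_le hule
    have husum : u.sum = r * x := by
      rw [hu, Multiset.sum_replicate, smul_eq_mul]
      conv_rhs => rw [← bs_mul_pow_vv hr x]
      ring
    have hssum : (s - u).sum + r * x = s.sum := by
      conv_rhs => rw [← hadd]
      rw [Multiset.sum_add, husum]
    have hcount : (s - u).count (bs r x) = s.count (bs r x) - r ^ (vv r x + 1) := by
      rw [Multiset.count_sub, hu, Multiset.count_replicate, if_pos rfl]
    have hsub : ∀ y ∈ s - u, y ≠ 0 ∧ ¬ r ∣ y := fun y hy => hs y (mem_of_mem_sub hy)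
    rw [mem_Wset hr]
    dsimp only
    refine ⟨by omega, hsub, ht, hcard, ?_⟩
    rw [mem_Gl_iff hr hsub hx0, hcount, shift_down hr hP]
    exact hcnt
  · rintro ⟨⟨s, t⟩, a⟩ hz
    rw [mem_Wset hr] at hz
    obtain ⟨hsum, hs, ht, hcard, hag⟩ := hz
    dsimp only at hsum hs ht hcard hag ⊢
    have ha0 : a ≠ 0 := mem_Gl_ne_zero hr hs hag
    have hcnt := (mem_Gl_iff hr hs ha0).mp hag
    set u := Multiset.replicate (r ^ (vv r a + 1)) (bs r a) with hu
    have husum : u.sum = r * a := by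
      rw [hu, Multiset.sum_replicate, smul_eq_mul]
      conv_rhs => rw [← bs_mul_pow_vv hr a]
      ring
    have hbs0 : bs r a ≠ 0 := bs_ne_zero hr ha0
    have hbsnd : ¬ r ∣ bs r a := not_dvd_bs hr a ha0
    have hsadd : ∀ y ∈ s + u, y ≠ 0 ∧ ¬ r ∣ y := by
      intro y hy
      rcases Multiset.mem_add.mp hy with h | h
      · exact hs y h
      · rw [hu] at h
        rw [Multiset.eq_of_mem_replicate h]
        exact ⟨hbs0, hbsnd⟩
    have hcount : (s + u).count (bs r a) = s.count (bs r a) + r ^ (vv r a + 1) := by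
      rw [Multiset.count_add, hu, Multiset.count_replicate, if_pos rfl]
    rw [Finset.mem_sigma, mem_ODom hr]
    have hsum2 : (s + u).sum = s.sum + r * a := by rw [Multiset.sum_add, husum]
    refine ⟨⟨?_, hsadd, ht, hcard⟩, ?_⟩
    · dsimp only
      omega
    · dsimp only
      rw [Finset.mem_filter, Multiset.mem_toFinset, mem_Gl_iff hr hsadd ha0, hcount]
      refine ⟨?_, by omega⟩
      rw [shift_up hr]
      exact hcnt
  · rintro ⟨⟨s, t⟩, x⟩ hz
    rw [Finset.mem_sigma] at hz
    obtain ⟨hq, hx⟩ := hz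
    rw [mem_ODom hr] at hq
    rw [Finset.mem_filter, Multiset.mem_toFinset] at hx
    have hule : Multiset.replicate (r ^ (vv r x + 1)) (bs r x) ≤ s := by
      rw [Multiset.le_iff_count]
      intro b
      rw [Multiset.count_replicate]
      by_cases hb : bs r x = b
      · rw [if_pos hb, ← hb]
        exact hx.2
      · rw [if_neg hb]
        omega
    have hadd : s - Multiset.replicate (r ^ (vv r x + 1)) (bs r x)
        + Multiset.replicate (r ^ (vv r x + 1)) (bs r x) = s := tsub_add_cancel_of_le hule
    dsimp only
    rw [hadd]
  · rintro ⟨⟨s, t⟩, a⟩ hz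
    have h : s + Multiset.replicate (r ^ (vv r a + 1)) (bs r a)
        - Multiset.replicate (r ^ (vv r a + 1)) (bs r a) = s := add_tsub_cancel_right _ _
    dsimp only
    rw [h]

lemma L1core {r : ℕ} (hr : 2 ≤ r) (n j : ℕ) :
    ((ODom r n j).sigma (fun q =>
        q.2.toFinset.filter fun a => 2 ≤ q.2.count a ∧ a ∈ Gl r q.1)).card
      + ((ODom r n (j+1)).sigma (fun q =>
        q.2.toFinset.filter fun a => q.2.count a = 1 ∧ a ∈ Gl r q.1)).card
      = (Wset r n j).card := by
  rw [← Finset.card_filter_add_card_filter_not (s := Wset r n j)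
    (p := fun z => z.2 ∈ z.1.2)]
  congr 1
  · -- A2 ≃ {a still in t}
    apply card_nbij_old
      (i := fun z => ((z.1.1, z.1.2 - {z.2}), z.2))
      (j := fun z => ⟨(z.1.1, z.1.2 + {z.2}), z.2⟩)
    · rintro ⟨⟨s, t⟩, a⟩ hz
      rw [Finset.mem_sigma] at hz
      obtain ⟨hq, ha⟩ := hz
      rw [mem_ODom hr] at hq
      obtain ⟨hsum, hs, ht, hcard⟩ := hq
      rw [Finset.mem_filter, Multiset.mem_toFinset] at ha
      obtain ⟨hat, hct, hag⟩ := ha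
      dsimp only at hsum hs ht hcard hat hct hag ⊢
      have hsle : ({a} : Multiset ℕ) ≤ t := Multiset.singleton_le.mpr hat
      have hadd : t - {a} + {a} = t := tsub_add_cancel_of_le hsle
      have hsumt : (t - {a}).sum + a = t.sum := by
        conv_rhs => rw [← hadd]
        rw [Multiset.sum_add, Multiset.sum_singleton]
      have hcnt' : (t - {a}).count a = t.count a - 1 := by
        rw [Multiset.count_sub, Multiset.count_singleton, if_pos rfl]
      have hmem' : a ∈ t - {a} := by
        rw [← Multiset.count_pos, hcnt']
        omega
      have hsupp : (t - {a}).toFinset = t.toFinset := by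
        ext b
        rw [Multiset.mem_toFinset, Multiset.mem_toFinset, ← Multiset.count_pos,
          ← Multiset.count_pos, Multiset.count_sub, Multiset.count_singleton]
        by_cases hb : b = a
        · subst hb
          rw [if_pos rfl]
          omega
        · rw [if_neg hb]
          omega
      have hrt : r * t.sum = r * (t - {a}).sum + r * a := by
        rw [← hsumt, Nat.mul_add]
      rw [Finset.mem_filter, mem_Wset hr]
      dsimp only
      refine ⟨⟨by omega, hs, fun x hx => ht x (mem_of_mem_sub hx), by rw [hsupp]; exact hcard,
        hag⟩, hmem'⟩
    · rintro ⟨⟨s, t⟩, a⟩ hz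
      rw [Finset.mem_filter, mem_Wset hr] at hz
      obtain ⟨⟨hsum, hs, ht, hcard, hag⟩, hat⟩ := hz
      dsimp only at hsum hs ht hcard hag hat ⊢
      have ha0 : a ≠ 0 := mem_Gl_ne_zero hr hs hag
      have hsupp : (t + {a}).toFinset = t.toFinset := by
        rw [Multiset.toFinset_add, Multiset.toFinset_singleton]
        rw [Finset.union_comm]
        apply Finset.union_eq_right.mpr
        intro b hb
        rw [Finset.mem_singleton] at hb
        subst hb
        rwa [Multiset.mem_toFinset]
      rw [Finset.mem_sigma, mem_ODom hr]
      dsimp only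
      have hsumt : (t + {a}).sum = t.sum + a := by
        rw [Multiset.sum_add, Multiset.sum_singleton]
      have hrt : r * (t + {a}).sum = r * t.sum + r * a := by
        rw [hsumt, Nat.mul_add]
      refine ⟨⟨by omega, hs, ?_, by rw [hsupp]; exact hcard⟩, ?_⟩
      · intro x hx
        rcases Multiset.mem_add.mp hx with h | h
        · exact ht x h
        · rw [Multiset.mem_singleton] at h
          subst h
          exact ha0
      · rw [Finset.mem_filter, Multiset.mem_toFinset]
        have hc : (t + {a}).count a = t.count a + 1 := by
          rw [Multiset.count_add, Multiset.count_singleton, if_pos rfl]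
        have hat' : 0 < t.count a := Multiset.count_pos.mpr hat
        refine ⟨Multiset.mem_add.mpr (Or.inl hat), by omega, hag⟩
    · rintro ⟨⟨s, t⟩, a⟩ hz
      rw [Finset.mem_sigma] at hz
      obtain ⟨-, ha⟩ := hz
      rw [Finset.mem_filter, Multiset.mem_toFinset] at ha
      have hsle : ({a} : Multiset ℕ) ≤ t := Multiset.singleton_le.mpr ha.1
      have h : t - {a} + {a} = t := tsub_add_cancel_of_le hsle
      dsimp only
      rw [h]
    · rintro ⟨⟨s, t⟩, a⟩ hz
      have h : t + {a} - {a} = t := add_tsub_cancel_right _ _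
      dsimp only
      rw [h]
  · -- A1 ≃ {a no longer in t}
    apply card_nbij_old
      (i := fun z => ((z.1.1, z.1.2 - {z.2}), z.2))
      (j := fun z => ⟨(z.1.1, z.1.2 + {z.2}), z.2⟩)
    · rintro ⟨⟨s, t⟩, a⟩ hz
      rw [Finset.mem_sigma] at hz
      obtain ⟨hq, ha⟩ := hz
      rw [mem_ODom hr] at hq
      obtain ⟨hsum, hs, ht, hcard⟩ := hq
      rw [Finset.mem_filter, Multiset.mem_toFinset] at ha
      obtain ⟨hat, hct, hag⟩ := ha
      dsimp only at hsum hs ht hcard hat hct hag ⊢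
      have hsle : ({a} : Multiset ℕ) ≤ t := Multiset.singleton_le.mpr hat
      have hadd : t - {a} + {a} = t := tsub_add_cancel_of_le hsle
      have hsumt : (t - {a}).sum + a = t.sum := by
        conv_rhs => rw [← hadd]
        rw [Multiset.sum_add, Multiset.sum_singleton]
      have hcnt' : (t - {a}).count a = 0 := by
        rw [Multiset.count_sub, Multiset.count_singleton, if_pos rfl, hct]
      have hnmem : a ∉ t - {a} := by
        rw [← Multiset.count_pos, hcnt']
        omega
      have hsupp : (t - {a}).toFinset = t.toFinset.erase a := by
        ext b
        rw [Multiset.mem_toFinset, Finset.mem_erase, Multiset.mem_toFinset,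
          ← Multiset.count_pos, ← Multiset.count_pos, Multiset.count_sub,
          Multiset.count_singleton]
        by_cases hb : b = a
        · subst hb
          rw [if_pos rfl, hct]
          omega
        · rw [if_neg hb]
          constructor
          · intro h
            exact ⟨hb, by omega⟩
          · rintro ⟨-, h⟩
            omega
      have hrt : r * t.sum = r * (t - {a}).sum + r * a := by
        rw [← hsumt, Nat.mul_add]
      rw [Finset.mem_filter, mem_Wset hr]
      dsimp only
      refine ⟨⟨by omega, hs, fun x hx => ht x (mem_of_mem_sub hx), ?_, hag⟩, hnmem⟩
      rw [hsupp, Finset.card_erase_of_mem (Multiset.mem_toFinset.mpr hat)]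
      omega
    · rintro ⟨⟨s, t⟩, a⟩ hz
      rw [Finset.mem_filter, mem_Wset hr] at hz
      obtain ⟨⟨hsum, hs, ht, hcard, hag⟩, hat⟩ := hz
      dsimp only at hsum hs ht hcard hag hat ⊢
      have ha0 : a ≠ 0 := mem_Gl_ne_zero hr hs hag
      have hsupp : (t + {a}).toFinset = insert a t.toFinset := by
        rw [Multiset.toFinset_add, Multiset.toFinset_singleton, Finset.union_comm]
        rfl
      rw [Finset.mem_sigma, mem_ODom hr]
      dsimp only
      have hsumt : (t + {a}).sum = t.sum + a := by
        rw [Multiset.sum_add, Multiset.sum_singleton]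
      have hrt : r * (t + {a}).sum = r * t.sum + r * a := by
        rw [hsumt, Nat.mul_add]
      refine ⟨⟨by omega, hs, ?_, ?_⟩, ?_⟩
      · intro x hx
        rcases Multiset.mem_add.mp hx with h | h
        · exact ht x h
        · rw [Multiset.mem_singleton] at h
          subst h
          exact ha0
      · rw [hsupp, Finset.card_insert_of_notMem (fun hc => hat (Multiset.mem_toFinset.mp hc)),
          hcard]
      · rw [Finset.mem_filter, Multiset.mem_toFinset]
        have hc : (t + {a}).count a = t.count a + 1 := by
          rw [Multiset.count_add, Multiset.count_singleton, if_pos rfl]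
        have hat' : t.count a = 0 := by
          rw [← Multiset.count_eq_zero] at hat
          exact hat
        refine ⟨Multiset.mem_add.mpr (Or.inr (Multiset.mem_singleton_self a)), by omega, hag⟩
    · rintro ⟨⟨s, t⟩, a⟩ hz
      rw [Finset.mem_sigma] at hz
      obtain ⟨-, ha⟩ := hz
      rw [Finset.mem_filter, Multiset.mem_toFinset] at ha
      have hsle : ({a} : Multiset ℕ) ≤ t := Multiset.singleton_le.mpr ha.1
      have h : t - {a} + {a} = t := tsub_add_cancel_of_le hsle
      dsimp only
      rw [h]
    · rintro ⟨⟨s, t⟩, a⟩ hz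
      have h : t + {a} - {a} = t := add_tsub_cancel_right _ _
      dsimp only
      rw [h]

end BeckG


section MainAssembly

open BeckG

lemma main_nat {r : ℕ} (hr : 2 ≤ r) (n j : ℕ) :
    (∑ p ∈ setD j r n, numDistinctParts p) + Tcount j r n
      = (∑ p ∈ setO j r n, numDistinctParts p) + Tcount (j + 1) r n := by
  classical
  set fcard : Multiset ℕ → ℕ := fun s => s.toFinset.card with hfcard
  set fT : Multiset ℕ → ℕ :=
    fun s => (s.toFinset.filter fun i => r + 1 ≤ s.count i ∧ s.count i ≤ 2 * r - 1).card with hfT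
  -- D side: number of distinct parts
  have hD : (∑ p ∈ setD j r n, numDistinctParts p)
      = ∑ q ∈ ODom r n j, ((Gl r q.1).toFinset ∪ q.2.toFinset).card := by
    have e1 : (∑ p ∈ setD j r n, numDistinctParts p)
        = ∑ s ∈ (PartMS n).filter
            (fun s => (s.toFinset.filter fun i => r ≤ s.count i).card = j), fcard s :=
      sum_partition (fun s => (s.toFinset.filter fun i => r ≤ s.count i).card = j) fcard
    have e2 := D_split hr n j fcard
    have e3 := G_transfer hr n j (fun q => fcard (q.1 + r • q.2))
    rw [e1, e2, e3]
    apply Finset.sum_congr rfl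
    intro q hq
    rw [hfcard]
    dsimp only
    rw [stat_D_union hr]
  -- T_j
  have hTj : ∀ k : ℕ, Tcount k r n
      = ∑ q ∈ ODom r n k,
          (q.2.toFinset.filter fun a => q.2.count a = 1 ∧ a ∈ Gl r q.1).card := by
    intro k
    have e1 : Tcount k r n
        = ∑ s ∈ (PartMS n).filter
            (fun s => (s.toFinset.filter fun i => r ≤ s.count i).card = k), fT s :=
      sum_partition (fun s => (s.toFinset.filter fun i => r ≤ s.count i).card = k) fT
    have e2 := D_split hr n k fT
    have e3 := G_transfer hr n k (fun q => fT (q.1 + r • q.2))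
    rw [e1, e2, e3]
    apply Finset.sum_congr rfl
    intro q hq
    rw [mem_ODom hr] at hq
    obtain ⟨hsum, hs, ht, hcard⟩ := hq
    rw [hfT]
    dsimp only
    exact stat_T hr (fun a => count_Gl_lt hr hs a)
  -- O side
  have hO : (∑ p ∈ setO j r n, numDistinctParts p)
      = ∑ q ∈ ODom r n j, (q.1.toFinset.card + q.2.toFinset.card) := by
    have e1 : (∑ p ∈ setO j r n, numDistinctParts p)
        = ∑ s ∈ (PartMS n).filter
            (fun s => (s.toFinset.filter fun i => r ∣ i).card = j), fcard s :=
      sum_partition (fun s => (s.toFinset.filter fun i => r ∣ i).card = j) fcard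
    have e2 := O_split hr n j fcard
    rw [e1, e2]
    apply Finset.sum_congr rfl
    intro q hq
    rw [mem_ODom hr] at hq
    obtain ⟨hsum, hs, ht, hcard⟩ := hq
    rw [hfcard]
    dsimp only
    exact stat_O hr hs
  -- pointwise identity summed
  have hpt : (∑ q ∈ ODom r n j, ((Gl r q.1).toFinset ∪ q.2.toFinset).card)
      + (∑ q ∈ ODom r n j,
          (q.2.toFinset.filter fun a => q.2.count a = 1 ∧ a ∈ Gl r q.1).card)
      + (∑ q ∈ ODom r n j,
          (q.2.toFinset.filter fun a => 2 ≤ q.2.count a ∧ a ∈ Gl r q.1).card)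
      = (∑ q ∈ ODom r n j, (q.1.toFinset.card + q.2.toFinset.card))
      + (∑ q ∈ ODom r n j,
          ((Gl r q.1).toFinset.filter fun x => r ^ (vv r x + 1) ≤ q.1.count (bs r x)).card) := by
    rw [← Finset.sum_add_distrib, ← Finset.sum_add_distrib, ← Finset.sum_add_distrib]
    apply Finset.sum_congr rfl
    intro q hq
    rw [mem_ODom hr] at hq
    obtain ⟨hsum, hs, ht, hcard⟩ := hq
    have h1 := Finset.card_union_add_card_inter (Gl r q.1).toFinset q.2.toFinset
    have h2 := inter_split hr (Gl r q.1) q.2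
    have h3 := B_split hr hs
    omega
  -- the two core counting results
  have hB : (∑ q ∈ ODom r n j,
        ((Gl r q.1).toFinset.filter fun x => r ^ (vv r x + 1) ≤ q.1.count (bs r x)).card)
      = (∑ q ∈ ODom r n j,
          (q.2.toFinset.filter fun a => 2 ≤ q.2.count a ∧ a ∈ Gl r q.1).card)
        + (∑ q ∈ ODom r n (j+1),
          (q.2.toFinset.filter fun a => q.2.count a = 1 ∧ a ∈ Gl r q.1).card) := by
    have l2 := L2core hr n j
    have l1 := L1core hr n j
    simp only [Finset.card_sigma] at l2 l1
    omega
  rw [hD, hO, hTj j, hTj (j+1)]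
  omega

end MainAssembly

/-- `b'_{j,r}(n) = T_{j+1,r}(n) - T_{j,r}(n)` in the integers. -/
theorem bDiff'_eq (n j r : ℕ) (hr : 2 ≤ r) :
    bDiff' j r n = (Tcount (j + 1) r n : ℤ) - (Tcount j r n : ℤ) := by
  have h := main_nat hr n j
  rw [bDiff']
  rw [show (∑ p ∈ setD j r n, (numDistinctParts p : ℤ))
      = ((∑ p ∈ setD j r n, numDistinctParts p : ℕ) : ℤ) by rw [Nat.cast_sum]]
  rw [show (∑ p ∈ setO j r n, (numDistinctParts p : ℤ))
      = ((∑ p ∈ setO j r n, numDistinctParts p : ℕ) : ℤ) by rw [Nat.cast_sum]]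
  omega
end
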